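/- arXiv:1104.4415 — 3 statements merged into one kernel-verified Lean document; each statement's English description precedes it below -/
import Mathlib

section
/- Let d ≥ 2, let H = (V, E) be a d-sparse finite graph with d-critical cover 𝒳 satisfying |𝒳| ≥ 2, and suppose every d-critical component of H has at least d + 2 vertices. Put a_j = Σ_{U ∈ Θ_j(𝒳)} (d_𝒳(U) − 1) for 0 ≤ j ≤ d. Then for every 0 ≤ k ≤ d − 2 we have (d − k) a_{k+1} − (k + 1) a_{k+2} < binom(d+1, k+2) · (|𝒳| − 1). -/
open Finset
open scoped Classical

variable {α : Type*} [DecidableEq α]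

/-- The set of edges of `E` with both endpoints in `X`. -/
noncomputable def inducedEdges (E : Finset (Sym2 α)) (X : Finset α) : Finset (Sym2 α) :=
  E.filter fun e => ∀ v ∈ e, v ∈ X

/-- `i_G(X)`: the number of edges of `E` with both endpoints in `X`. -/
noncomputable def iG (E : Finset (Sym2 α)) (X : Finset α) : ℕ :=
  (inducedEdges E X).card

/-- `E` is a valid edge set on the vertex set `V`: edges are loopless and join vertices of `V`. -/
def ValidOn (V : Finset α) (E : Finset (Sym2 α)) : Prop :=
  ∀ e ∈ E, ¬ e.IsDiag ∧ ∀ v ∈ e, v ∈ V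

/-- The graph `(V, E)` is `d`-sparse: every `X ⊆ V` with `|X| ≥ d` satisfies
`i(X) ≤ d|X| - (d+1 choose 2)`. -/
noncomputable def Sparse (d : ℕ) (V : Finset α) (E : Finset (Sym2 α)) : Prop :=
  ∀ X ⊆ V, d ≤ X.card → iG E X + Nat.choose (d + 1) 2 ≤ d * X.card

/-- `(U, F)` is a subgraph of `(V, E)`. -/
def IsSubgraph (V : Finset α) (E : Finset (Sym2 α)) (U : Finset α) (F : Finset (Sym2 α)) :
    Prop :=
  U ⊆ V ∧ F ⊆ E ∧ ∀ e ∈ F, ∀ v ∈ e, v ∈ U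

/-- The graph `(U, F)` is `d`-critical: either `|U| = 2` and `|F| = 1`, or `|U| ≥ d + 2` and
`|F| = d|U| - (d+1 choose 2)`. -/
def Critical (d : ℕ) (U : Finset α) (F : Finset (Sym2 α)) : Prop :=
  (U.card = 2 ∧ F.card = 1) ∨
  (d + 2 ≤ U.card ∧ F.card + Nat.choose (d + 1) 2 = d * U.card)

/-- `(U, F)` is a `d`-critical subgraph of `(V, E)`. -/
def CritSubgraph (d : ℕ) (V : Finset α) (E : Finset (Sym2 α)) (U : Finset α)
    (F : Finset (Sym2 α)) : Prop :=
  IsSubgraph V E U F ∧ Critical d U F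

/-- `(U, F)` is a `d`-critical component of `(V, E)`: a `d`-critical subgraph not properly
contained in any other `d`-critical subgraph. -/
def CritComponent (d : ℕ) (V : Finset α) (E : Finset (Sym2 α)) (U : Finset α)
    (F : Finset (Sym2 α)) : Prop :=
  CritSubgraph d V E U F ∧
  ∀ U' F', CritSubgraph d V E U' F' → U ⊆ U' → F ⊆ F' → U = U' ∧ F = F'

/-- The `d`-critical cover of `(V, E)`: the family of vertex sets of its `d`-critical
components. -/
noncomputable def critCover (d : ℕ) (V : Finset α) (E : Finset (Sym2 α)) :
    Finset (Finset α) :=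
  V.powerset.filter fun U => ∃ F, CritComponent d V E U F

/-- `d_𝒳(W)`: the number of members of the family `𝒳` containing `W`. -/
def degX (𝒳 : Finset (Finset α)) (W : Finset α) : ℕ :=
  (𝒳.filter fun X => W ⊆ X).card

/-- `Θ_k(𝒳)`: the set of `k`-hinges of `𝒳`, i.e. `k`-element subsets of `V` lying in at least
two members of `𝒳`.  (For `k = 0` this is `{∅}` exactly when `|𝒳| ≥ 2`.) -/
noncomputable def theta (V : Finset α) (𝒳 : Finset (Finset α)) (k : ℕ) :
    Finset (Finset α) :=
  V.powerset.filter fun W => W.card = k ∧ 2 ≤ degX 𝒳 W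

/-- `𝒳` is a cover of `(V, E)`: every member has at least two vertices and every edge is
induced by some member. -/
def IsCover (E : Finset (Sym2 α)) (𝒳 : Finset (Finset α)) : Prop :=
  (∀ X ∈ 𝒳, 2 ≤ X.card) ∧ ∀ e ∈ E, ∃ X ∈ 𝒳, ∀ v ∈ e, v ∈ X

/-- `𝒳` is `t`-thin: any two distinct members intersect in at most `t` vertices. -/
def Thin (t : ℕ) (𝒳 : Finset (Finset α)) : Prop :=
  ∀ X ∈ 𝒳, ∀ Y ∈ 𝒳, X ≠ Y → (X ∩ Y).card ≤ t

/-- `(V, F)` is a maximal `d`-sparse (spanning) subgraph of `(V, E)`. -/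
noncomputable def MaxSparse (d : ℕ) (V : Finset α) (E F : Finset (Sym2 α)) : Prop :=
  F ⊆ E ∧ Sparse d V F ∧ ∀ e ∈ E, e ∉ F → ¬ Sparse d V (insert e F)

set_option linter.unusedSectionVars false

/-! ### Auxiliary machinery for stmt7 -/

/-- The endpoint set of an edge, as a `Finset`. -/
noncomputable def symF (e : Sym2 α) : Finset α :=
  Sym2.lift ⟨fun x y => {x, y}, fun x y => Finset.pair_comm x y⟩ e

@[simp] lemma symF_mk (x y : α) : symF (s(x, y)) = {x, y} := rfl

lemma mem_symF {a : α} {e : Sym2 α} : a ∈ symF e ↔ a ∈ e := by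
  induction e using Sym2.ind with
  | _ x y => simp [Sym2.mem_iff]

lemma symF_card {e : Sym2 α} (h : ¬ e.IsDiag) : (symF e).card = 2 := by
  induction e using Sym2.ind with
  | _ x y =>
    have : x ≠ y := by simpa using h
    simp [Finset.card_pair this]

lemma symF_injOn {e e' : Sym2 α} (h : symF e = symF e') : e = e' := by
  induction e using Sym2.ind with
  | _ x y =>
    induction e' using Sym2.ind with
    | _ z w =>
      simp only [symF_mk] at h
      have hz : z ∈ ({x, y} : Finset α) := by rw [h]; simp
      have hw : w ∈ ({x, y} : Finset α) := by rw [h]; simp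
      have hx : x ∈ ({z, w} : Finset α) := by rw [← h]; simp
      have hy : y ∈ ({z, w} : Finset α) := by rw [← h]; simp
      simp only [Finset.mem_insert, Finset.mem_singleton] at hz hw hx hy
      rw [Sym2.eq_iff]
      rcases hx with hx | hx <;> rcases hy with hy | hy <;>
        rcases hz with hz | hz <;> rcases hw with hw | hw <;> subst_vars <;> tauto

lemma inducedEdges_mono {E : Finset (Sym2 α)} {X Y : Finset α} (h : X ⊆ Y) :
    inducedEdges E X ⊆ inducedEdges E Y := by
  intro e he
  simp only [inducedEdges, Finset.mem_filter] at he ⊢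
  exact ⟨he.1, fun v hv => h (he.2 v hv)⟩

lemma critCover_mem {d : ℕ} {V : Finset α} {E : Finset (Sym2 α)} {X : Finset α}
    (h : X ∈ critCover d V E) : X ⊆ V ∧ ∃ F, CritComponent d V E X F := by
  simp only [critCover, Finset.mem_filter, Finset.mem_powerset] at h
  exact h

/-- The edge set of a critical component equals the induced edges. -/
lemma comp_edges {d : ℕ} {V : Finset α} {E : Finset (Sym2 α)} {X : Finset α}
    {F : Finset (Sym2 α)} (hd : 2 ≤ d) (hsp : Sparse d V E)
    (hbig : ∀ U F, CritComponent d V E U F → d + 2 ≤ U.card)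
    (hc : CritComponent d V E X F) : F = inducedEdges E X := by
  obtain ⟨hXV, hFE, hFX⟩ := hc.1.1
  have hcrit := hc.1.2
  have hFsub : F ⊆ inducedEdges E X := by
    intro e he
    simp only [inducedEdges, Finset.mem_filter]
    exact ⟨hFE he, hFX e he⟩
  have hcard : d + 2 ≤ X.card := hbig X F hc
  rcases hcrit with ⟨h2, _⟩ | ⟨_, hF⟩
  · omega
  · have hs := hsp X hXV (by omega)
    exact Finset.eq_of_subset_of_card_le hFsub (by unfold iG at hs; omega)

/-- Tightness of components. -/
lemma comp_tight {d : ℕ} {V : Finset α} {E : Finset (Sym2 α)} {X : Finset α}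
    {F : Finset (Sym2 α)} (hd : 2 ≤ d) (hsp : Sparse d V E)
    (hbig : ∀ U F, CritComponent d V E U F → d + 2 ≤ U.card)
    (hc : CritComponent d V E X F) :
    iG E X + Nat.choose (d + 1) 2 = d * X.card := by
  have he := comp_edges hd hsp hbig hc
  have hcard : d + 2 ≤ X.card := hbig X F hc
  rcases hc.1.2 with ⟨h2, _⟩ | ⟨_, hF⟩
  · omega
  · rw [iG, ← he]; exact hF
/-- Strict sparsity for unions of at least two distinct critical components. -/
lemma union_strict {d : ℕ} {V : Finset α} {E : Finset (Sym2 α)}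
    (hd : 2 ≤ d) (hsp : Sparse d V E)
    (hbig : ∀ U F, CritComponent d V E U F → d + 2 ≤ U.card)
    (𝒴 : Finset (Finset α)) (h𝒴 : 𝒴 ⊆ critCover d V E)
    {Y₀ Y₁ : Finset α} (h0 : Y₀ ∈ 𝒴) (h1 : Y₁ ∈ 𝒴) (hne : Y₀ ≠ Y₁) :
    iG E (𝒴.sup id) + Nat.choose (d + 1) 2 + 1 ≤ d * (𝒴.sup id).card := by
  set W := 𝒴.sup id with hW
  have hWV : W ⊆ V := by
    intro v hv
    rw [hW, Finset.mem_sup] at hv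
    obtain ⟨X, hX, hvX⟩ := hv
    exact (critCover_mem (h𝒴 hX)).1 hvX
  obtain ⟨_, F₀, hc0⟩ := critCover_mem (h𝒴 h0)
  obtain ⟨_, F₁, hc1⟩ := critCover_mem (h𝒴 h1)
  have hY0W : Y₀ ⊆ W := Finset.le_sup (f := (id : Finset α → Finset α)) h0
  have hY1W : Y₁ ⊆ W := Finset.le_sup (f := (id : Finset α → Finset α)) h1
  have hcard : d + 2 ≤ W.card :=
    le_trans (hbig Y₀ F₀ hc0) (Finset.card_le_card hY0W)
  have hs := hsp W hWV (by omega)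
  rcases Nat.lt_or_ge (iG E W + Nat.choose (d + 1) 2) (d * W.card) with h | h
  · omega
  · exfalso
    have heq : iG E W + Nat.choose (d + 1) 2 = d * W.card := le_antisymm hs h
    have hcs : CritSubgraph d V E W (inducedEdges E W) := by
      refine ⟨⟨hWV, Finset.filter_subset _ _, ?_⟩, Or.inr ⟨hcard, heq⟩⟩
      intro e he v hv
      simp only [inducedEdges, Finset.mem_filter] at he
      exact he.2 v hv
    have hF0 : F₀ = inducedEdges E Y₀ := comp_edges hd hsp hbig hc0
    have hF1 : F₁ = inducedEdges E Y₁ := comp_edges hd hsp hbig hc1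
    have h0W := hc0.2 W (inducedEdges E W) hcs hY0W
      (by rw [hF0]; exact inducedEdges_mono hY0W)
    have hY10 : Y₁ ⊆ Y₀ := by rw [h0W.1]; exact hY1W
    have h1W := hc1.2 Y₀ F₀ hc0.1 hY10
      (by rw [hF1, hF0]; exact inducedEdges_mono hY10)
    exact hne h1W.1.symm

/-- Generic fiberwise sum bound. -/
lemma sum_le_mul_sum {β γ : Type*} [DecidableEq γ] (A : Finset β) (B : Finset γ)
    (g : β → γ) (w : β → ℤ) (ω : γ → ℤ) (m : ℕ)
    (hmap : ∀ e ∈ A, g e ∈ B) (hw : ∀ e ∈ A, w e = ω (g e))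
    (hfib : ∀ c ∈ B, (A.filter (fun e => g e = c)).card ≤ m)
    (hω : ∀ c ∈ B, 0 ≤ ω c) :
    ∑ e ∈ A, w e ≤ (m : ℤ) * ∑ c ∈ B, ω c := by
  have h1 : ∑ e ∈ A, w e = ∑ c ∈ B, ∑ e ∈ A.filter (fun e => g e = c), w e :=
    (Finset.sum_fiberwise_of_maps_to hmap w).symm
  rw [h1, Finset.mul_sum]
  refine Finset.sum_le_sum fun c hc => ?_
  have : ∑ e ∈ A.filter (fun e => g e = c), w e
      = ((A.filter (fun e => g e = c)).card : ℤ) * ω c := by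
    rw [Finset.sum_congr rfl (g := fun _ => ω c) fun e he => by
      simp only [Finset.mem_filter] at he
      rw [hw e he.1, he.2], Finset.sum_const, nsmul_eq_mul]
  rw [this]
  exact mul_le_mul_of_nonneg_right (by exact_mod_cast hfib c hc) (hω c hc)

/-- Sum swap for hinge double counting. -/
lemma swap_sum (A B : Finset (Finset α)) (f : Finset α → ℤ) :
    ∑ S ∈ A, ∑ U ∈ B.filter (fun U => S ⊆ U), f U
      = ∑ U ∈ B, ((A.filter (fun S => S ⊆ U)).card : ℤ) * f U := by
  have : ∀ S ∈ A, ∑ U ∈ B.filter (fun U => S ⊆ U), f U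
      = ∑ U ∈ B, if S ⊆ U then f U else 0 := fun S _ => Finset.sum_filter _ _
  rw [Finset.sum_congr rfl this, Finset.sum_comm]
  refine Finset.sum_congr rfl fun U _ => ?_
  rw [← Finset.sum_filter, Finset.sum_const, nsmul_eq_mul]

lemma degX_antitone {𝒳 : Finset (Finset α)} {S U : Finset α} (h : S ⊆ U) :
    degX 𝒳 U ≤ degX 𝒳 S := by
  unfold degX
  apply Finset.card_le_card
  intro X hX
  simp only [Finset.mem_filter] at hX ⊢
  exact ⟨hX.1, h.trans hX.2⟩

lemma theta_filter_eq {V : Finset α} {𝒳 : Finset (Finset α)} {j k : ℕ} (hkj : k ≤ j)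
    {U : Finset α} (hU : U ∈ theta V 𝒳 j) :
    (theta V 𝒳 k).filter (fun S => S ⊆ U) = U.powersetCard k := by
  simp only [theta, Finset.mem_filter, Finset.mem_powerset] at hU
  obtain ⟨hUV, hUcard, hUdeg⟩ := hU
  ext S
  simp only [Finset.mem_filter, Finset.mem_powersetCard, theta, Finset.mem_powerset]
  constructor
  · rintro ⟨⟨_, hc, _⟩, hSU⟩; exact ⟨hSU, hc⟩
  · rintro ⟨hSU, hc⟩
    exact ⟨⟨hSU.trans hUV, hc, le_trans hUdeg (degX_antitone hSU)⟩, hSU⟩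
/-- Binomial identity: `C(k,2) + C(d+1,2) = C(d-k+1,2) + d*k` for `k ≤ d`. -/
lemma choose_shift {d k : ℕ} (h : k ≤ d) :
    Nat.choose k 2 + Nat.choose (d + 1) 2 = Nat.choose (d - k + 1) 2 + d * k := by
  induction k with
  | zero => simp
  | succ k ih =>
    have hk : k ≤ d := by omega
    have e1 : Nat.choose (k + 1) 2 = Nat.choose k 2 + k := by
      rw [Nat.choose_succ_succ]
      simp [Nat.choose_one_right, Nat.add_comm]
    have e3 : Nat.choose (d - k + 1) 2
        = Nat.choose (d - (k + 1) + 1) 2 + (d - (k + 1) + 1) := by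
      obtain ⟨m, hm⟩ : ∃ m, d - (k + 1) = m := ⟨_, rfl⟩
      rw [hm, show d - k + 1 = m + 2 by omega]
      rw [Nat.choose_succ_succ]
      simp [Nat.choose_one_right, Nat.add_comm]
    have ih' := ih hk
    have hmul : d * (k + 1) = d * k + d := by ring
    omega

lemma inter_empty_iff {A S : Finset α} : A ∩ S = ∅ ↔ ∀ v ∈ A, v ∉ S := by
  simp only [Finset.eq_empty_iff_forall_notMem, Finset.mem_inter, not_and]

lemma exists_decomp {S : Finset α} {e : Sym2 α}
    (h1 : ¬ symF e ⊆ S) (h2 : ¬ (symF e ∩ S = ∅)) :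
    ∃ x y, e = s(x, y) ∧ x ∈ S ∧ y ∉ S := by
  rw [inter_empty_iff] at h2
  induction e using Sym2.ind with
  | _ x y =>
    simp only [symF_mk] at h1 h2
    by_cases hx : x ∈ S
    · by_cases hy : y ∈ S
      · exfalso
        apply h1
        intro v hv
        simp only [Finset.mem_insert, Finset.mem_singleton] at hv
        rcases hv with rfl | rfl <;> assumption
      · exact ⟨x, y, rfl, hx, hy⟩
    · by_cases hy : y ∈ S
      · exact ⟨y, x, Sym2.eq_swap, hy, hx⟩
      · exfalso
        apply h2
        intro v hv
        simp only [Finset.mem_insert, Finset.mem_singleton] at hv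
        rcases hv with rfl | rfl <;> assumption
/-- The per-hinge counting inequality. -/
lemma perS {d k : ℕ} {V : Finset α} {E : Finset (Sym2 α)} {𝒳 : Finset (Finset α)}
    (hd : 2 ≤ d) (hkd : k ≤ d) (hval : ValidOn V E) (hsp : Sparse d V E)
    (h𝒳 : 𝒳 = critCover d V E)
    (hbig : ∀ U F, CritComponent d V E U F → d + 2 ≤ U.card)
    {S : Finset α} (hS : S ∈ theta V 𝒳 k) :
    ((d : ℤ) - k) * (∑ U ∈ (theta V 𝒳 (k+1)).filter (fun U => S ⊆ U),
        ((degX 𝒳 U : ℤ) - 1)) + 1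
      ≤ (Nat.choose (d - k + 1) 2 : ℤ) * ((degX 𝒳 S : ℤ) - 1)
        + ∑ U ∈ (theta V 𝒳 (k+2)).filter (fun U => S ⊆ U), ((degX 𝒳 U : ℤ) - 1) := by
  classical
  simp only [theta, Finset.mem_filter, Finset.mem_powerset] at hS
  obtain ⟨hSV, hSk, ht2⟩ := hS
  set 𝒴 : Finset (Finset α) := 𝒳.filter (fun X => S ⊆ X) with h𝒴def
  set t : ℕ := degX 𝒳 S with htdef
  have ht𝒴 : 𝒴.card = t := rfl
  set W : Finset α := 𝒴.sup id with hWdef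
  set 𝔈 : Finset (Sym2 α) := 𝒴.sup (fun X => inducedEdges E X) with h𝔈def
  set dv : α → ℕ := fun v => (𝒴.filter (fun X => v ∈ X)).card with hdvdef
  set n : Sym2 α → ℕ := fun e => (𝒴.filter (fun X => e ∈ inducedEdges E X)).card
    with hndef
  have hmemY : ∀ X ∈ 𝒴, X ∈ 𝒳 ∧ S ⊆ X := fun X hX => Finset.mem_filter.mp hX
  have h𝒴sub : 𝒴 ⊆ critCover d V E := by
    rw [← h𝒳]; exact Finset.filter_subset _ _
  obtain ⟨Y₀, h0, Y₁, h1, hne⟩ := Finset.one_lt_card.mp (by omega : 1 < 𝒴.card)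
  have hXW : ∀ X ∈ 𝒴, X ⊆ W := fun X hX => Finset.le_sup (f := (id : Finset α → Finset α)) hX
  have hSW : S ⊆ W := (hmemY Y₀ h0).2.trans (hXW Y₀ h0)
  have hEsub : ∀ X ∈ 𝒴, inducedEdges E X ⊆ 𝔈 := fun X hX =>
    Finset.le_sup (f := fun X => inducedEdges E X) hX
  have h𝔈E : 𝔈 ⊆ E := by
    intro e he
    rw [h𝔈def, Finset.mem_sup] at he
    obtain ⟨X, _, heX⟩ := he
    exact Finset.filter_subset _ _ heX
  have h𝔈ind : 𝔈 ⊆ inducedEdges E W := by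
    intro e he
    rw [h𝔈def, Finset.mem_sup] at he
    obtain ⟨X, hX, heX⟩ := he
    exact inducedEdges_mono (hXW X hX) heX
  have he𝔈W : ∀ e ∈ 𝔈, ∀ v ∈ e, v ∈ W := by
    intro e he v hv
    have := h𝔈ind he
    simp only [inducedEdges, Finset.mem_filter] at this
    exact this.2 v hv
  have htight : ∀ X ∈ 𝒴, iG E X + Nat.choose (d+1) 2 = d * X.card := by
    intro X hX
    obtain ⟨_, F, hc⟩ := critCover_mem (h𝒴sub hX)
    exact comp_tight hd hsp hbig hc
  -- counting identities
  have T1 : ∑ X ∈ 𝒴, iG E X + Nat.choose (d+1) 2 * t = d * ∑ X ∈ 𝒴, X.card := by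
    have h0' : ∑ X ∈ 𝒴, (iG E X + Nat.choose (d+1) 2) = ∑ X ∈ 𝒴, d * X.card :=
      Finset.sum_congr rfl htight
    rw [Finset.sum_add_distrib, Finset.sum_const, smul_eq_mul, ← Finset.mul_sum] at h0'
    rw [← ht𝒴, mul_comm (Nat.choose (d+1) 2) 𝒴.card]
    exact h0'
  have T2 : ∑ X ∈ 𝒴, X.card = ∑ v ∈ W, dv v := by
    have h1 : ∀ X ∈ 𝒴, X.card = ∑ v ∈ W, (if v ∈ X then 1 else 0) := by
      intro X hX
      rw [← Finset.card_filter]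
      congr 1
      ext v
      simp only [Finset.mem_filter]
      exact ⟨fun h => ⟨hXW X hX h, h⟩, fun h => h.2⟩
    rw [Finset.sum_congr rfl h1, Finset.sum_comm]
    exact Finset.sum_congr rfl fun v _ => (Finset.card_filter _ _).symm
  have T3 : ∑ X ∈ 𝒴, iG E X = ∑ e ∈ 𝔈, n e := by
    have h1 : ∀ X ∈ 𝒴, iG E X = ∑ e ∈ 𝔈, (if e ∈ inducedEdges E X then 1 else 0) := by
      intro X hX
      rw [← Finset.card_filter]
      unfold iG
      congr 1
      ext e
      simp only [Finset.mem_filter]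
      exact ⟨fun h => ⟨hEsub X hX h, h⟩, fun h => h.2⟩
    rw [Finset.sum_congr rfl h1, Finset.sum_comm]
    exact Finset.sum_congr rfl fun e _ => (Finset.card_filter _ _).symm
  have T6 : 𝔈.card + Nat.choose (d+1) 2 + 1 ≤ d * W.card := by
    have hu := union_strict hd hsp hbig 𝒴 h𝒴sub h0 h1 hne
    rw [← hWdef] at hu
    have hc := Finset.card_le_card h𝔈ind
    unfold iG at hu
    omega
  have hdv1 : ∀ v ∈ W, 1 ≤ dv v := by
    intro v hv
    rw [hWdef, Finset.mem_sup] at hv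
    obtain ⟨X, hX, hvX⟩ := hv
    exact Finset.card_pos.mpr ⟨X, Finset.mem_filter.mpr ⟨hX, hvX⟩⟩
  have hn1 : ∀ e ∈ 𝔈, 1 ≤ n e := by
    intro e he
    rw [h𝔈def, Finset.mem_sup] at he
    obtain ⟨X, hX, heX⟩ := he
    exact Finset.card_pos.mpr ⟨X, Finset.mem_filter.mpr ⟨hX, heX⟩⟩
  have hnt : ∀ e, n e ≤ t := fun e => ht𝒴 ▸ Finset.card_le_card (Finset.filter_subset _ _)
  -- ℤ-level quantities
  set A2 : ℤ := ∑ v ∈ W \ S, ((dv v : ℤ) - 1) with hA2def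
  set B : ℤ := ∑ e ∈ 𝔈, ((n e : ℤ) - 1) with hBdef
  have EA : ∑ v ∈ W, ((dv v : ℤ) - 1) = (k : ℤ) * ((t : ℤ) - 1) + A2 := by
    rw [← Finset.sum_sdiff hSW, hA2def]
    have hson : ∀ v ∈ S, ((dv v : ℤ) - 1) = (t : ℤ) - 1 := by
      intro v hv
      have : 𝒴.filter (fun X => v ∈ X) = 𝒴 := by
        apply Finset.filter_true_of_mem
        intro X hX
        exact (hmemY X hX).2 hv
      rw [hdvdef]
      simp only
      rw [this, ht𝒴]
    rw [Finset.sum_congr rfl hson, Finset.sum_const, hSk]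
    push_cast
    ring
  -- base inequality
  have zA : ∑ v ∈ W, ((dv v : ℤ) - 1) = (∑ v ∈ W, (dv v : ℤ)) - W.card := by
    rw [Finset.sum_sub_distrib, Finset.sum_const]
    simp
  have zB : B = (∑ e ∈ 𝔈, (n e : ℤ)) - 𝔈.card := by
    rw [hBdef, Finset.sum_sub_distrib, Finset.sum_const]
    simp
  have m1 : (d : ℤ) * ∑ v ∈ W, (dv v : ℤ)
      = B + 𝔈.card + (Nat.choose (d+1) 2 : ℤ) * t := by
    have z1 : ((∑ X ∈ 𝒴, iG E X : ℕ) : ℤ) + (Nat.choose (d+1) 2 : ℤ) * (t : ℤ)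
        = (d : ℤ) * ((∑ X ∈ 𝒴, X.card : ℕ) : ℤ) := by exact_mod_cast congrArg Nat.cast T1
    have z2 : ((∑ X ∈ 𝒴, X.card : ℕ) : ℤ) = ∑ v ∈ W, (dv v : ℤ) := by
      push_cast
      exact_mod_cast congrArg Nat.cast T2
    have z3 : ((∑ X ∈ 𝒴, iG E X : ℕ) : ℤ) = ∑ e ∈ 𝔈, (n e : ℤ) := by
      push_cast
      exact_mod_cast congrArg Nat.cast T3
    rw [← z2, ← z1, z3, zB]
    ring
  have Ebase : (d : ℤ) * ((k : ℤ) * ((t : ℤ) - 1) + A2) + (Nat.choose (d+1) 2 : ℤ) + 1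
      ≤ B + (Nat.choose (d+1) 2 : ℤ) * t := by
    have m2 : (d : ℤ) * ((k : ℤ) * ((t : ℤ) - 1) + A2)
        = (d : ℤ) * (∑ v ∈ W, (dv v : ℤ)) - (d : ℤ) * W.card := by
      rw [← EA, zA]; ring
    have z6 : (𝔈.card : ℤ) + (Nat.choose (d+1) 2 : ℤ) + 1 ≤ (d : ℤ) * W.card := by
      exact_mod_cast T6
    rw [m2, m1]
    linarith
  -- degree identities
  have hdeg_inter : ∀ e ∈ 𝔈, degX 𝒳 (S ∪ symF e) = n e := by
    intro e he
    have hset : 𝒳.filter (fun X => S ∪ symF e ⊆ X)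
        = 𝒴.filter (fun X => e ∈ inducedEdges E X) := by
      ext X
      simp only [Finset.mem_filter, h𝒴def]
      constructor
      · rintro ⟨hX𝒳, hU⟩
        refine ⟨⟨hX𝒳, (Finset.union_subset_iff.mp hU).1⟩, ?_⟩
        simp only [inducedEdges, Finset.mem_filter]
        exact ⟨h𝔈E he, fun v hv => hU (Finset.mem_union_right _ (mem_symF.mpr hv))⟩
      · rintro ⟨⟨hX𝒳, hSX⟩, heX⟩
        simp only [inducedEdges, Finset.mem_filter] at heX
        exact ⟨hX𝒳, Finset.union_subset hSX fun v hv => heX.2 v (mem_symF.mp hv)⟩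
    show (𝒳.filter (fun X => S ∪ symF e ⊆ X)).card = n e
    rw [hset]
  have hn_dv : ∀ e ∈ 𝔈, ∀ x y : α, e = s(x,y) → x ∈ S → n e = dv y := by
    intro e he x y hexy hxS
    show (𝒴.filter (fun X => e ∈ inducedEdges E X)).card
      = (𝒴.filter (fun X => y ∈ X)).card
    congr 1
    ext X
    simp only [Finset.mem_filter]
    constructor
    · rintro ⟨hX𝒴, heX⟩
      simp only [inducedEdges, Finset.mem_filter] at heX
      exact ⟨hX𝒴, heX.2 y (by rw [hexy]; exact Sym2.mem_mk_right x y)⟩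
    · rintro ⟨hX𝒴, hyX⟩
      refine ⟨hX𝒴, ?_⟩
      simp only [inducedEdges, Finset.mem_filter]
      refine ⟨h𝔈E he, fun v hv => ?_⟩
      rw [hexy] at hv
      rcases Sym2.mem_iff.mp hv with rfl | rfl
      · exact (hmemY X hX𝒴).2 hxS
      · exact hyX
  have hdeg_dv : ∀ v : α, degX 𝒳 (S ∪ {v}) = dv v := by
    intro v
    show (𝒳.filter (fun X => S ∪ {v} ⊆ X)).card = (𝒴.filter (fun X => v ∈ X)).card
    congr 1
    ext X
    simp only [Finset.mem_filter, h𝒴def]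
    constructor
    · rintro ⟨hX𝒳, hU⟩
      exact ⟨⟨hX𝒳, (Finset.union_subset_iff.mp hU).1⟩,
        hU (Finset.mem_union_right _ (Finset.mem_singleton_self v))⟩
    · rintro ⟨⟨hX𝒳, hSX⟩, hvX⟩
      exact ⟨hX𝒳, Finset.union_subset hSX (Finset.singleton_subset_iff.mpr hvX)⟩
  -- the three parts of B
  have HB2 : ∑ e ∈ 𝔈.filter (fun e => symF e ⊆ S), ((n e : ℤ) - 1)
      ≤ (Nat.choose k 2 : ℤ) * ((t : ℤ) - 1) := by
    have hb : ∀ e ∈ 𝔈.filter (fun e => symF e ⊆ S), ((n e : ℤ) - 1) ≤ (t : ℤ) - 1 := by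
      intro e _
      have := hnt e
      omega
    have h1 := Finset.sum_le_card_nsmul _ _ _ hb
    have hcard2 : (𝔈.filter (fun e => symF e ⊆ S)).card ≤ Nat.choose k 2 := by
      have hmaps : ∀ e ∈ 𝔈.filter (fun e => symF e ⊆ S), symF e ∈ S.powersetCard 2 := by
        intro e he
        obtain ⟨he𝔈, hsub⟩ := Finset.mem_filter.mp he
        exact Finset.mem_powersetCard.mpr ⟨hsub, symF_card (hval e (h𝔈E he𝔈)).1⟩
      have := Finset.card_le_card_of_injOn symF hmaps
        (fun e _ e' _ h => symF_injOn h)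
      rwa [Finset.card_powersetCard, hSk] at this
    have htz1 : (0:ℤ) ≤ (t : ℤ) - 1 := by omega
    calc ∑ e ∈ 𝔈.filter (fun e => symF e ⊆ S), ((n e : ℤ) - 1)
        ≤ (𝔈.filter (fun e => symF e ⊆ S)).card • ((t:ℤ)-1) := h1
      _ = ((𝔈.filter (fun e => symF e ⊆ S)).card : ℤ) * ((t:ℤ)-1) := nsmul_eq_mul _ _
      _ ≤ (Nat.choose k 2 : ℤ) * ((t:ℤ)-1) :=
          mul_le_mul_of_nonneg_right (by exact_mod_cast hcard2) htz1
  set Θ2 : Finset (Finset α) := (theta V 𝒳 (k+2)).filter (fun U => S ⊆ U) with hΘ2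
  have HB0 : ∑ e ∈ (𝔈.filter (fun e => ¬ symF e ⊆ S)).filter
        (fun e => symF e ∩ S = ∅), ((n e : ℤ) - 1)
      ≤ ∑ U ∈ Θ2, ((degX 𝒳 U : ℤ) - 1) := by
    set A0 : Finset (Sym2 α) := (𝔈.filter (fun e => ¬ symF e ⊆ S)).filter
      (fun e => symF e ∩ S = ∅) with hA0
    have hsplit := Finset.sum_filter_add_sum_filter_not A0 (fun e => 2 ≤ n e)
      (fun e => ((n e:ℤ)-1))
    have hzero : ∑ e ∈ A0.filter (fun e => ¬ 2 ≤ n e), ((n e:ℤ)-1) = 0 := by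
      apply Finset.sum_eq_zero
      intro e he
      simp only [hA0, Finset.mem_filter] at he
      have h1 := hn1 e he.1.1.1
      have h2 : n e = 1 := by omega
      rw [h2]
      norm_num
    have hmain : ∑ e ∈ A0.filter (fun e => 2 ≤ n e), ((n e:ℤ)-1)
        ≤ ((1:ℕ):ℤ) * ∑ U ∈ Θ2, ((degX 𝒳 U : ℤ) - 1) := by
      refine sum_le_mul_sum _ _ (fun e => S ∪ symF e) _ _ 1 ?_ ?_ ?_ ?_
      · intro e he
        show S ∪ symF e ∈ Θ2
        simp only [hA0, Finset.mem_filter] at he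
        obtain ⟨⟨⟨he𝔈, hnsub⟩, hdisj⟩, hn2⟩ := he
        have hEe : e ∈ E := h𝔈E he𝔈
        have hdisj' : Disjoint S (symF e) := by
          rw [Finset.disjoint_iff_inter_eq_empty, Finset.inter_comm]
          exact hdisj
        rw [hΘ2]
        simp only [theta, Finset.mem_filter, Finset.mem_powerset]
        refine ⟨⟨?_, ?_, ?_⟩, Finset.subset_union_left⟩
        · exact Finset.union_subset hSV
            (fun v hv => (hval e hEe).2 v (mem_symF.mp hv))
        · rw [Finset.card_union_of_disjoint hdisj', hSk, symF_card (hval e hEe).1]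
        · rw [hdeg_inter e he𝔈]
          exact hn2
      · intro e he
        show ((n e : ℤ) - 1) = ((degX 𝒳 (S ∪ symF e) : ℤ) - 1)
        simp only [hA0, Finset.mem_filter] at he
        rw [hdeg_inter e he.1.1.1]
      · intro U hU
        rw [Finset.card_le_one]
        intro e he e' he'
        simp only [hA0, Finset.mem_filter] at he he'
        apply symF_injOn
        have hd1 : Disjoint S (symF e) := by
          rw [Finset.disjoint_iff_inter_eq_empty, Finset.inter_comm]
          exact he.1.1.2
        have hd2 : Disjoint S (symF e') := by
          rw [Finset.disjoint_iff_inter_eq_empty, Finset.inter_comm]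
          exact he'.1.1.2
        have he2 : S ∪ symF e = U := he.2
        have he2' : S ∪ symF e' = U := he'.2
        have e1 : symF e = U \ S := by
          rw [← he2, Finset.union_sdiff_cancel_left hd1]
        have e2 : symF e' = U \ S := by
          rw [← he2', Finset.union_sdiff_cancel_left hd2]
        rw [e1, e2]
      · intro U hU
        rw [hΘ2] at hU
        simp only [theta, Finset.mem_filter] at hU
        have := hU.1.2.2
        omega
    rw [Nat.cast_one, one_mul] at hmain
    have hfin : ∑ e ∈ A0, ((n e:ℤ)-1) ≤ ∑ U ∈ Θ2, ((degX 𝒳 U : ℤ) - 1) := by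
      linarith
    rw [hA0] at hfin
    exact hfin
  set Bimg : Finset (Finset α) := (W \ S).image (fun v => ({v} : Finset α)) with hBimg
  have hωB : ∑ T ∈ Bimg, (∑ v ∈ T, ((dv v : ℤ) - 1)) = A2 := by
    rw [hBimg, Finset.sum_image (fun x _ y _ h => Finset.singleton_injective h), hA2def]
    exact Finset.sum_congr rfl fun v _ => Finset.sum_singleton _ _
  have HB1 : ∑ e ∈ (𝔈.filter (fun e => ¬ symF e ⊆ S)).filter
        (fun e => ¬ symF e ∩ S = ∅), ((n e : ℤ) - 1)
      ≤ (k : ℤ) * A2 := by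
    have hh := sum_le_mul_sum ((𝔈.filter (fun e => ¬ symF e ⊆ S)).filter
        (fun e => ¬ symF e ∩ S = ∅)) Bimg (fun e => symF e \ S)
        (fun e => ((n e:ℤ)-1)) (fun T => ∑ v ∈ T, ((dv v:ℤ)-1)) k ?_ ?_ ?_ ?_
    · rw [hωB] at hh
      exact hh
    · intro e he
      show symF e \ S ∈ Bimg
      simp only [Finset.mem_filter] at he
      obtain ⟨⟨he𝔈, hnsub⟩, hnd0⟩ := he
      obtain ⟨x, y, hexy, hxS, hyS⟩ := exists_decomp hnsub hnd0
      have hyW : y ∈ W := he𝔈W e he𝔈 y (by rw [hexy]; exact Sym2.mem_mk_right x y)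
      have hsd : symF e \ S = {y} := by
        rw [hexy, symF_mk]
        ext v
        simp only [Finset.mem_sdiff, Finset.mem_insert, Finset.mem_singleton]
        constructor
        · rintro ⟨hv | hv, hvs⟩
          · exact absurd (hv ▸ hxS) hvs
          · exact hv
        · rintro rfl
          exact ⟨Or.inr rfl, hyS⟩
      rw [hsd, hBimg]
      exact Finset.mem_image.mpr ⟨y, Finset.mem_sdiff.mpr ⟨hyW, hyS⟩, rfl⟩
    · intro e he
      show ((n e : ℤ) - 1) = ∑ v ∈ symF e \ S, ((dv v : ℤ) - 1)
      simp only [Finset.mem_filter] at he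
      obtain ⟨⟨he𝔈, hnsub⟩, hnd0⟩ := he
      obtain ⟨x, y, hexy, hxS, hyS⟩ := exists_decomp hnsub hnd0
      have hsd : symF e \ S = {y} := by
        rw [hexy, symF_mk]
        ext v
        simp only [Finset.mem_sdiff, Finset.mem_insert, Finset.mem_singleton]
        constructor
        · rintro ⟨hv | hv, hvs⟩
          · exact absurd (hv ▸ hxS) hvs
          · exact hv
        · rintro rfl
          exact ⟨Or.inr rfl, hyS⟩
      rw [hsd, Finset.sum_singleton, hn_dv e he𝔈 x y hexy hxS]
    · intro c hc
      rw [hBimg] at hc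
      obtain ⟨v, hv, rfl⟩ := Finset.mem_image.mp hc
      have hsur : Set.SurjOn (fun s => s(s, v)) (S : Set α)
          ((((𝔈.filter (fun e => ¬ symF e ⊆ S)).filter
            (fun e => ¬ symF e ∩ S = ∅)).filter
            (fun e => symF e \ S = ({v} : Finset α)) : Finset (Sym2 α)) : Set (Sym2 α)) := by
        intro e he'
        simp only [Finset.coe_filter, Set.mem_setOf_eq, Finset.mem_filter] at he'
        obtain ⟨⟨⟨he𝔈, hnsub⟩, hnd0⟩, hgd⟩ := he'
        obtain ⟨x, y, hexy, hxS, hyS⟩ := exists_decomp hnsub hnd0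
        have hsd : symF e \ S = {y} := by
          rw [hexy, symF_mk]
          ext u
          simp only [Finset.mem_sdiff, Finset.mem_insert, Finset.mem_singleton]
          constructor
          · rintro ⟨hu | hu, hus⟩
            · exact absurd (hu ▸ hxS) hus
            · exact hu
          · rintro rfl
            exact ⟨Or.inr rfl, hyS⟩
        have hyv : y = v := Finset.singleton_injective (hsd ▸ hgd)
        refine ⟨x, hxS, ?_⟩
        show s(x, v) = e
        rw [hexy, hyv]
      have hcb := Finset.card_le_card_of_surjOn _ hsur
      rw [hSk] at hcb
      exact le_trans (Finset.card_le_card (by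
        intro e he
        simp only [Finset.mem_filter] at he ⊢
        exact ⟨he.1, he.2⟩)) hcb
    · intro c hc
      show (0:ℤ) ≤ ∑ v ∈ c, ((dv v : ℤ) - 1)
      rw [hBimg] at hc
      obtain ⟨v, hv, rfl⟩ := Finset.mem_image.mp hc
      rw [Finset.sum_singleton]
      have := hdv1 v (Finset.mem_sdiff.mp hv).1
      omega
  -- bound on the (k+1)-hinge sum
  have Hα : ∑ U ∈ (theta V 𝒳 (k+1)).filter (fun U => S ⊆ U), ((degX 𝒳 U : ℤ) - 1)
      ≤ A2 := by
    have hh := sum_le_mul_sum ((theta V 𝒳 (k+1)).filter (fun U => S ⊆ U)) Bimg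
        (fun U => U \ S) (fun U => ((degX 𝒳 U:ℤ)-1))
        (fun T => ∑ v ∈ T, ((dv v:ℤ)-1)) 1 ?_ ?_ ?_ ?_
    · rw [hωB, Nat.cast_one, one_mul] at hh
      exact hh
    · intro U hU
      show U \ S ∈ Bimg
      simp only [theta, Finset.mem_filter, Finset.mem_powerset] at hU
      obtain ⟨⟨hUV, hUc, hUdeg⟩, hSU⟩ := hU
      have hcard1 : (U \ S).card = 1 := by
        rw [Finset.card_sdiff_of_subset hSU, hUc, hSk]
        omega
      obtain ⟨v, hveq⟩ := Finset.card_eq_one.mp hcard1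
      have hvmem : v ∈ U \ S := hveq ▸ Finset.mem_singleton_self v
      have hvU : v ∈ U := (Finset.mem_sdiff.mp hvmem).1
      have hvS : v ∉ S := (Finset.mem_sdiff.mp hvmem).2
      obtain ⟨X, hX⟩ := Finset.card_pos.mp (by omega : 0 < degX 𝒳 U)
      have hX' := Finset.mem_filter.mp hX
      have hX𝒴 : X ∈ 𝒴 := Finset.mem_filter.mpr ⟨hX'.1, hSU.trans hX'.2⟩
      have hvW : v ∈ W := hXW X hX𝒴 (hX'.2 hvU)
      rw [hveq, hBimg]
      exact Finset.mem_image.mpr ⟨v, Finset.mem_sdiff.mpr ⟨hvW, hvS⟩, rfl⟩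
    · intro U hU
      show ((degX 𝒳 U : ℤ) - 1) = ∑ v ∈ U \ S, ((dv v : ℤ) - 1)
      simp only [theta, Finset.mem_filter, Finset.mem_powerset] at hU
      obtain ⟨⟨hUV, hUc, hUdeg⟩, hSU⟩ := hU
      have hcard1 : (U \ S).card = 1 := by
        rw [Finset.card_sdiff_of_subset hSU, hUc, hSk]
        omega
      obtain ⟨v, hveq⟩ := Finset.card_eq_one.mp hcard1
      have hvmem : v ∈ U \ S := hveq ▸ Finset.mem_singleton_self v
      have hvU : v ∈ U := (Finset.mem_sdiff.mp hvmem).1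
      have hUeq : U = S ∪ {v} := by
        apply Finset.Subset.antisymm
        · intro u hu
          by_cases huS : u ∈ S
          · exact Finset.mem_union_left _ huS
          · have : u ∈ U \ S := Finset.mem_sdiff.mpr ⟨hu, huS⟩
            rw [hveq] at this
            exact Finset.mem_union_right _ this
        · exact Finset.union_subset hSU (Finset.singleton_subset_iff.mpr hvU)
      rw [hveq, Finset.sum_singleton, ← hdeg_dv v, ← hUeq]
    · intro c hc
      rw [Finset.card_le_one]
      intro U hU U' hU'
      simp only [Finset.mem_filter] at hU hU'
      have hSU : S ⊆ U := by
        have := hU.1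
        simp only [theta, Finset.mem_filter] at this
        exact hU.1.2
      have hSU' : S ⊆ U' := hU'.1.2
      have hu2 : U \ S = c := hU.2
      have hu2' : U' \ S = c := hU'.2
      have r1 : U = S ∪ c := by rw [← hu2, Finset.union_sdiff_of_subset hSU]
      have r2 : U' = S ∪ c := by rw [← hu2', Finset.union_sdiff_of_subset hSU']
      rw [r1, r2]
    · intro c hc
      show (0:ℤ) ≤ ∑ v ∈ c, ((dv v : ℤ) - 1)
      rw [hBimg] at hc
      obtain ⟨v, hv, rfl⟩ := Finset.mem_image.mp hc
      rw [Finset.sum_singleton]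
      have := hdv1 v (Finset.mem_sdiff.mp hv).1
      omega
  -- final assembly
  have hα' : ((d:ℤ) - k) * (∑ U ∈ (theta V 𝒳 (k+1)).filter (fun U => S ⊆ U),
        ((degX 𝒳 U:ℤ)-1)) ≤ ((d:ℤ) - k) * A2 := by
    apply mul_le_mul_of_nonneg_left Hα
    have : (k:ℤ) ≤ (d:ℤ) := by exact_mod_cast hkd
    linarith
  have hBsplit : B = (∑ e ∈ 𝔈.filter (fun e => symF e ⊆ S), ((n e:ℤ)-1))
      + ((∑ e ∈ (𝔈.filter (fun e => ¬ symF e ⊆ S)).filter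
          (fun e => symF e ∩ S = ∅), ((n e:ℤ)-1))
      + (∑ e ∈ (𝔈.filter (fun e => ¬ symF e ⊆ S)).filter
          (fun e => ¬ symF e ∩ S = ∅), ((n e:ℤ)-1))) := by
    rw [hBdef, ← Finset.sum_filter_add_sum_filter_not 𝔈 (fun e => symF e ⊆ S)
        (fun e => ((n e:ℤ)-1)),
      ← Finset.sum_filter_add_sum_filter_not (𝔈.filter (fun e => ¬ symF e ⊆ S))
        (fun e => symF e ∩ S = ∅) (fun e => ((n e:ℤ)-1))]

  have hcs : ((Nat.choose k 2 : ℤ) + (Nat.choose (d+1) 2 : ℤ))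
      = (Nat.choose (d-k+1) 2 : ℤ) + (d:ℤ) * (k:ℤ) := by
    exact_mod_cast choose_shift hkd
  have hcs2 : (Nat.choose k 2 : ℤ) * ((t:ℤ)-1) + (Nat.choose (d+1) 2 : ℤ) * ((t:ℤ)-1)
      = (Nat.choose (d-k+1) 2 : ℤ) * ((t:ℤ)-1) + (d:ℤ) * (k:ℤ) * ((t:ℤ)-1) := by
    linear_combination ((t:ℤ) - 1) * hcs
  rw [hΘ2] at HB0
  linarith [Ebase, HB2, HB0, HB1, hα', hBsplit, hcs2]
lemma two_mul_choose_two : ∀ n : ℕ, 2 * Nat.choose n 2 = n * (n - 1) := by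
  intro n
  induction n with
  | zero => simp
  | succ n ih =>
    rw [Nat.choose_succ_succ, Nat.choose_one_right, Nat.mul_add, ih]
    cases n with
    | zero => simp
    | succ m =>
      simp only [Nat.succ_sub_one]
      ring

lemma theta_card_eq {V : Finset α} {𝒳 : Finset (Finset α)} {j : ℕ} {U : Finset α}
    (hU : U ∈ theta V 𝒳 j) : U.card = j := by
  simp only [theta, Finset.mem_filter] at hU
  exact hU.2.1

lemma sum_hinge_mult {V : Finset α} {𝒳 : Finset (Finset α)} {j k : ℕ} (hkj : k ≤ j) :
    ∑ S ∈ theta V 𝒳 k, ∑ U ∈ (theta V 𝒳 j).filter (fun U => S ⊆ U), ((degX 𝒳 U : ℤ) - 1)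
      = (Nat.choose j k : ℤ) * ∑ U ∈ theta V 𝒳 j, ((degX 𝒳 U : ℤ) - 1) := by
  rw [swap_sum, Finset.mul_sum]
  refine Finset.sum_congr rfl fun U hU => ?_
  rw [theta_filter_eq hkj hU, Finset.card_powersetCard, theta_card_eq hU]

lemma theta_sum_nonneg {V : Finset α} {𝒳 : Finset (Finset α)} {j : ℕ} :
    (0:ℤ) ≤ ∑ U ∈ theta V 𝒳 j, ((degX 𝒳 U : ℤ) - 1) := by
  refine Finset.sum_nonneg fun U hU => ?_
  simp only [theta, Finset.mem_filter] at hU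
  have := hU.2.2
  omega

/-- The summed inequality `S_k`. -/
lemma Sk {d k : ℕ} {V : Finset α} {E : Finset (Sym2 α)} {𝒳 : Finset (Finset α)}
    (hd : 2 ≤ d) (hkd : k ≤ d) (hval : ValidOn V E) (hsp : Sparse d V E)
    (h𝒳 : 𝒳 = critCover d V E)
    (hbig : ∀ U F, CritComponent d V E U F → d + 2 ≤ U.card) :
    ((d : ℤ) - k) * (((k : ℤ) + 1) * ∑ U ∈ theta V 𝒳 (k+1), ((degX 𝒳 U : ℤ) - 1))
        + ((theta V 𝒳 k).card : ℤ)
      ≤ (Nat.choose (d - k + 1) 2 : ℤ) * (∑ U ∈ theta V 𝒳 k, ((degX 𝒳 U : ℤ) - 1))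
        + (Nat.choose (k+2) 2 : ℤ) * (∑ U ∈ theta V 𝒳 (k+2), ((degX 𝒳 U : ℤ) - 1)) := by
  have hsum := Finset.sum_le_sum (f := fun S =>
      ((d : ℤ) - k) * (∑ U ∈ (theta V 𝒳 (k+1)).filter (fun U => S ⊆ U),
        ((degX 𝒳 U : ℤ) - 1)) + 1)
    (g := fun S => (Nat.choose (d - k + 1) 2 : ℤ) * ((degX 𝒳 S : ℤ) - 1)
        + ∑ U ∈ (theta V 𝒳 (k+2)).filter (fun U => S ⊆ U), ((degX 𝒳 U : ℤ) - 1))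
    (s := theta V 𝒳 k)
    (fun S hS => perS hd hkd hval hsp h𝒳 hbig hS)
  rw [Finset.sum_add_distrib, Finset.sum_const, ← Finset.mul_sum,
    Finset.sum_add_distrib, ← Finset.mul_sum, sum_hinge_mult (by omega : k ≤ k + 1),
    sum_hinge_mult (by omega : k ≤ k + 2)] at hsum
  have hc1 : Nat.choose (k+1) k = k + 1 := Nat.choose_succ_self_right k
  have hc2 : Nat.choose (k+2) k = Nat.choose (k+2) 2 := by
    rw [← Nat.choose_symm (by omega : k ≤ k + 2)]
    congr 1
    omega
  rw [hc1, hc2] at hsum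
  simp only [nsmul_eq_mul, mul_one] at hsum
  push_cast at hsum ⊢
  linarith

/-- `Θ₀ = {∅}` and its sum. -/
lemma theta_zero {V : Finset α} {𝒳 : Finset (Finset α)} (h𝒳2 : 2 ≤ 𝒳.card) :
    theta V 𝒳 0 = {∅} := by
  have hdeg : degX 𝒳 ∅ = 𝒳.card := by
    unfold degX
    rw [Finset.filter_true_of_mem (fun X _ => Finset.empty_subset X)]
  ext U
  simp only [theta, Finset.mem_filter, Finset.mem_powerset, Finset.card_eq_zero,
    Finset.mem_singleton]
  constructor
  · rintro ⟨_, hU, _⟩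
    exact hU
  · rintro rfl
    exact ⟨Finset.empty_subset V, rfl, by rw [hdeg]; exact h𝒳2⟩

/-- The main induction: `J_k`. -/
lemma Jk {d : ℕ} {V : Finset α} {E : Finset (Sym2 α)} {𝒳 : Finset (Finset α)}
    (hd : 2 ≤ d) (hval : ValidOn V E) (hsp : Sparse d V E)
    (h𝒳 : 𝒳 = critCover d V E) (h𝒳2 : 2 ≤ 𝒳.card)
    (hbig : ∀ U F, CritComponent d V E U F → d + 2 ≤ U.card) :
    ∀ k : ℕ, k + 2 ≤ d →
    ((d : ℤ) - k) * (∑ U ∈ theta V 𝒳 (k+1), ((degX 𝒳 U : ℤ) - 1))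
        - ((k : ℤ) + 1) * (∑ U ∈ theta V 𝒳 (k+2), ((degX 𝒳 U : ℤ) - 1))
      ≤ (Nat.choose (d+1) (k+2) : ℤ) * ((𝒳.card : ℤ) - 1) - 1 := by
  intro k
  induction k with
  | zero =>
    intro hk2
    have hS0 := Sk (k := 0) hd (by omega) hval hsp h𝒳 hbig
    rw [theta_zero h𝒳2] at hS0
    have hdeg : degX 𝒳 ∅ = 𝒳.card := by
      unfold degX
      rw [Finset.filter_true_of_mem (fun X _ => Finset.empty_subset X)]
    rw [Finset.sum_singleton, hdeg, Finset.card_singleton] at hS0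
    norm_num at hS0 ⊢
    linarith
  | succ k ih =>
    intro hk2
    have hIH := ih (by omega)
    have hSk1 := Sk (k := k+1) hd (by omega) hval hsp h𝒳 hbig
    have hrw : d - (k+1) + 1 = d - k := by omega
    rw [hrw] at hSk1
    -- abbreviations
    set B1 : ℤ := ∑ U ∈ theta V 𝒳 (k+1), ((degX 𝒳 U : ℤ) - 1) with hB1
    set B2 : ℤ := ∑ U ∈ theta V 𝒳 (k+2), ((degX 𝒳 U : ℤ) - 1) with hB2
    set B3 : ℤ := ∑ U ∈ theta V 𝒳 (k+3), ((degX 𝒳 U : ℤ) - 1) with hB3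
    have hSk1' : ((d:ℤ) - ((k+1:ℕ):ℤ)) * ((((k+1:ℕ):ℤ) + 1) * B2)
        + ((theta V 𝒳 (k+1)).card : ℤ)
        ≤ (Nat.choose (d-k) 2 : ℤ) * B1 + (Nat.choose (k+3) 2 : ℤ) * B3 := hSk1
    clear hSk1
    have hdk : ((d - k : ℕ) : ℤ) = (d:ℤ) - k := by
      rw [Nat.cast_sub (by omega)]
    have hdk1 : ((k:ℤ)+1+1) = (k:ℤ)+2 := by ring
    have f1 : 2 * (Nat.choose (d-k) 2 : ℤ) = ((d:ℤ) - k) * ((d:ℤ) - k - 1) := by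
      have := two_mul_choose_two (d - k)
      have h2 : ((d - k : ℕ) : ℤ) * (((d - k : ℕ) : ℤ) - 1) = ((d:ℤ)-k) * ((d:ℤ)-k-1) := by
        rw [hdk]
      have h3 : (((d - k) * (d - k - 1) : ℕ) : ℤ) = ((d:ℤ)-k) * ((d:ℤ)-k-1) := by
        push_cast [Nat.cast_sub (by omega : k ≤ d), Nat.cast_sub (by omega : 1 ≤ d - k)]
        ring
      calc 2 * (Nat.choose (d-k) 2 : ℤ) = ((2 * Nat.choose (d-k) 2 : ℕ) : ℤ) := by push_cast; ring
        _ = (((d - k) * (d - k - 1) : ℕ) : ℤ) := by rw [this]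
        _ = ((d:ℤ)-k) * ((d:ℤ)-k-1) := h3
    have f2 : 2 * (Nat.choose (k+3) 2 : ℤ) = ((k:ℤ)+3) * ((k:ℤ)+2) := by
      have := two_mul_choose_two (k+3)
      have : ((2 * Nat.choose (k+3) 2 : ℕ) : ℤ) = (((k+3) * (k+2) : ℕ) : ℤ) := by
        rw [this]; norm_num
      push_cast at this
      linarith
    have f3 : ((d:ℤ) - k - 1) * (Nat.choose (d+1) (k+2) : ℤ)
        = ((k:ℤ)+3) * (Nat.choose (d+1) (k+3) : ℤ) := by
      have h := Nat.choose_succ_right_eq (d+1) (k+2)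
      have hcast : ((Nat.choose (d+1) (k+3) * (k+3) : ℕ) : ℤ)
          = ((Nat.choose (d+1) (k+2) * (d + 1 - (k+2)) : ℕ) : ℤ) := by
        exact_mod_cast congrArg Nat.cast h
      have hsub : ((d + 1 - (k+2) : ℕ) : ℤ) = (d:ℤ) - (k:ℤ) - 1 := by
        rw [Nat.cast_sub (by omega)]
        push_cast
        ring
      rw [Nat.cast_mul, Nat.cast_mul, hsub] at hcast
      push_cast at hcast
      linarith
    have hd1 : (1:ℤ) ≤ (d:ℤ) - k - 1 := by
      have : (k:ℤ) + 3 ≤ (d:ℤ) := by exact_mod_cast hk2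
      linarith
    have hΘ0 : (0:ℤ) ≤ ((theta V 𝒳 (k+1)).card : ℤ) := by positivity
    have H1 : ((d:ℤ) - k - 1) * (((d:ℤ) - k) * B1 - ((k:ℤ)+1) * B2)
        ≤ ((d:ℤ) - k - 1) * ((Nat.choose (d+1) (k+2) : ℤ) * ((𝒳.card : ℤ) - 1) - 1) :=
      mul_le_mul_of_nonneg_left hIH (by linarith)
    have f1b : 2 * (Nat.choose (d-k) 2 : ℤ) * B1 = ((d:ℤ)-k) * ((d:ℤ)-k-1) * B1 := by
      rw [f1]
    have f2b : 2 * (Nat.choose (k+3) 2 : ℤ) * B3 = ((k:ℤ)+3) * ((k:ℤ)+2) * B3 := by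
      rw [f2]
    have f3b : ((d:ℤ) - k - 1) * (Nat.choose (d+1) (k+2) : ℤ) * ((𝒳.card : ℤ) - 1)
        = ((k:ℤ)+3) * (Nat.choose (d+1) (k+3) : ℤ) * ((𝒳.card : ℤ) - 1) := by
      rw [f3]
    have key : ((k:ℤ)+3) * (((d:ℤ) - (k+1:ℕ)) * B2 - (((k+1:ℕ):ℤ)+1) * B3)
        ≤ ((k:ℤ)+3) * ((Nat.choose (d+1) (k+3) : ℤ) * ((𝒳.card : ℤ) - 1)) - 1 := by
      push_cast
      push_cast at hSk1'
      linarith [H1, hSk1', f1b, f2b, f3b, hd1, hΘ0]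
    have hpos : (0:ℤ) < (k:ℤ) + 3 := by positivity
    have hlt : (((d:ℤ) - (k+1:ℕ)) * B2 - (((k+1:ℕ):ℤ)+1) * B3)
        < (Nat.choose (d+1) (k+3) : ℤ) * ((𝒳.card : ℤ) - 1) := by
      have h2 : ((k:ℤ)+3) * (((d:ℤ) - (k+1:ℕ)) * B2 - (((k+1:ℕ):ℤ)+1) * B3)
          < ((k:ℤ)+3) * ((Nat.choose (d+1) (k+3) : ℤ) * ((𝒳.card : ℤ) - 1)) := by
        linarith
      exact lt_of_mul_lt_mul_left h2 (by positivity)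
    have hfin := Int.lt_iff_add_one_le.mp hlt
    simp only [show k+1+1 = k+2 from rfl, show k+1+2 = k+3 from rfl]
    linarith

/-- Lemma 3.3(b) of the paper. -/
theorem stmt7 (d k : ℕ) (hd : 2 ≤ d) (hk : k ≤ d - 2)
    (V : Finset α) (E : Finset (Sym2 α)) (hval : ValidOn V E) (hsp : Sparse d V E)
    (𝒳 : Finset (Finset α)) (h𝒳 : 𝒳 = critCover d V E) (h𝒳2 : 2 ≤ 𝒳.card)
    (hbig : ∀ U F, CritComponent d V E U F → d + 2 ≤ U.card)
    (a : ℕ → ℤ) (ha : ∀ j ≤ d, a j = ∑ U ∈ theta V 𝒳 j, ((degX 𝒳 U : ℤ) - 1)) :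
    ((d : ℤ) - k) * a (k + 1) - ((k : ℤ) + 1) * a (k + 2) <
      (Nat.choose (d + 1) (k + 2) : ℤ) * ((𝒳.card : ℤ) - 1) := by
  have hk2 : k + 2 ≤ d := by omega
  have hJ := Jk hd hval hsp h𝒳 h𝒳2 hbig k hk2
  rw [ha (k+1) (by omega), ha (k+2) (by omega)]
  linarith
end

section
/- Let d ≥ 2, let H = (V, E) be a d-sparse finite graph with at least one edge, let 𝒳 be its d-critical cover, and suppose every d-critical component of H has at least d + 2 vertices. Then Σ_{U ∈ Θ_1(𝒳)} d_𝒳(U) < 2d · |𝒳|. -/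
open Finset
open scoped Classical

variable {α : Type*} [DecidableEq α]

namespace Stmt9

set_option linter.unusedSectionVars false

variable {α : Type*} [DecidableEq α]

/-- The endpoint set of an edge, as a finset (relative to the ambient vertex set `V`). -/
noncomputable def pfin (V : Finset α) (e : Sym2 α) : Finset α := V.filter (· ∈ e)

lemma mem_pfin {V : Finset α} {E : Finset (Sym2 α)} (hval : ValidOn V E)
    {e : Sym2 α} (he : e ∈ E) {w : α} : w ∈ pfin V e ↔ w ∈ e := by
  unfold pfin
  simp only [Finset.mem_filter]
  exact ⟨fun h => h.2, fun h => ⟨(hval e he).2 w h, h⟩⟩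

lemma pfin_eq {V : Finset α} {E : Finset (Sym2 α)} (hval : ValidOn V E)
    {x y : α} (he : s(x, y) ∈ E) : pfin V s(x, y) = {x, y} := by
  ext w
  rw [mem_pfin hval he, Sym2.mem_iff, Finset.mem_insert, Finset.mem_singleton]

lemma card_pfin {V : Finset α} {E : Finset (Sym2 α)} (hval : ValidOn V E)
    {e : Sym2 α} (he : e ∈ E) : (pfin V e).card = 2 := by
  induction e using Sym2.ind with
  | _ x y =>
    rw [pfin_eq hval he]
    have hxy : x ≠ y := by
      intro h
      exact (hval _ he).1 (by simp [h])
    rw [Finset.card_insert_of_notMem (by simp [hxy]), Finset.card_singleton]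

lemma pfin_inj {V : Finset α} {E : Finset (Sym2 α)} (hval : ValidOn V E)
    {e e' : Sym2 α} (he : e ∈ E) (he' : e' ∈ E) (h : pfin V e = pfin V e') : e = e' := by
  induction e using Sym2.ind with
  | _ x y =>
    induction e' using Sym2.ind with
    | _ z w =>
      rw [pfin_eq hval he, pfin_eq hval he'] at h
      have hxy : x ≠ y := fun hh => (hval _ he).1 (by simp [hh])
      have hx : x ∈ ({z, w} : Finset α) := by rw [← h]; simp
      have hy : y ∈ ({z, w} : Finset α) := by rw [← h]; simp
      have hz : z ∈ ({x, y} : Finset α) := by rw [h]; simp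
      have hw : w ∈ ({x, y} : Finset α) := by rw [h]; simp
      simp only [Finset.mem_insert, Finset.mem_singleton] at hx hy hz hw
      rw [Sym2.eq_iff]
      rcases hx with rfl | rfl
      · rcases hy with rfl | rfl
        · exact absurd rfl hxy
        · exact Or.inl ⟨rfl, rfl⟩
      · rcases hy with rfl | rfl
        · exact Or.inr ⟨rfl, rfl⟩
        · exact absurd rfl hxy

lemma forall_mem_iff_pfin_subset {V : Finset α} {E : Finset (Sym2 α)} (hval : ValidOn V E)
    {e : Sym2 α} (he : e ∈ E) {X : Finset α} :
    (∀ w ∈ e, w ∈ X) ↔ pfin V e ⊆ X := by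
  constructor
  · intro h w hw
    exact h w ((mem_pfin hval he).1 hw)
  · intro h w hw
    exact h ((mem_pfin hval he).2 hw)

lemma inducedEdges_mono {E : Finset (Sym2 α)} {X Y : Finset α} (h : X ⊆ Y) :
    inducedEdges E X ⊆ inducedEdges E Y := by
  intro e he
  rw [inducedEdges, Finset.mem_filter] at he ⊢
  exact ⟨he.1, fun v hv => h (he.2 v hv)⟩

lemma inducedEdges_inter (E : Finset (Sym2 α)) (X Y : Finset α) :
    inducedEdges E (X ∩ Y) = inducedEdges E X ∩ inducedEdges E Y := by
  ext e
  simp only [inducedEdges, Finset.mem_filter, Finset.mem_inter]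
  constructor
  · intro h
    exact ⟨⟨h.1, fun v hv => (h.2 v hv).1⟩, ⟨h.1, fun v hv => (h.2 v hv).2⟩⟩
  · intro h
    exact ⟨h.1.1, fun v hv => ⟨h.1.2 v hv, h.2.2 v hv⟩⟩

lemma supermod (E : Finset (Sym2 α)) (X Y : Finset α) :
    iG E X + iG E Y ≤ iG E (X ∪ Y) + iG E (X ∩ Y) := by
  have h1 : inducedEdges E X ∪ inducedEdges E Y ⊆ inducedEdges E (X ∪ Y) := by
    intro e he
    rcases Finset.mem_union.1 he with h | h
    · exact inducedEdges_mono Finset.subset_union_left h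
    · exact inducedEdges_mono Finset.subset_union_right h
  have h2 := Finset.card_union_add_card_inter (inducedEdges E X) (inducedEdges E Y)
  have h3 : (inducedEdges E X ∪ inducedEdges E Y).card ≤ iG E (X ∪ Y) :=
    Finset.card_le_card h1
  have h4 : (inducedEdges E X ∩ inducedEdges E Y).card = iG E (X ∩ Y) := by
    rw [← inducedEdges_inter]; rfl
  unfold iG at *
  omega

lemma comp_spec {d : ℕ} {V : Finset α} {E : Finset (Sym2 α)} (hd : 2 ≤ d)
    (hsp : Sparse d V E)
    (hbig : ∀ U F, CritComponent d V E U F → d + 2 ≤ U.card)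
    {X : Finset α} (hX : X ∈ critCover d V E) :
    X ⊆ V ∧ d + 2 ≤ X.card ∧ (inducedEdges E X).card + Nat.choose (d+1) 2 = d * X.card ∧
      CritComponent d V E X (inducedEdges E X) := by
  rw [critCover, Finset.mem_filter, Finset.mem_powerset] at hX
  obtain ⟨hXV, F, hF⟩ := hX
  have hcard := hbig X F hF
  have hFsub : F ⊆ inducedEdges E X := by
    intro e he
    rw [inducedEdges, Finset.mem_filter]
    exact ⟨hF.1.1.2.1 he, hF.1.1.2.2 e he⟩
  have hFcard : F.card + Nat.choose (d+1) 2 = d * X.card := by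
    rcases hF.1.2 with h | h
    · omega
    · exact h.2
  have hspX := hsp X hXV (by omega)
  have hle : (inducedEdges E X).card ≤ iG E X := le_refl _
  have hFle : F.card ≤ (inducedEdges E X).card := Finset.card_le_card hFsub
  have hiG : iG E X = (inducedEdges E X).card := rfl
  have hcards : F.card = (inducedEdges E X).card := by omega
  have hFeq : F = inducedEdges E X := Finset.eq_of_subset_of_card_le hFsub (le_of_eq hcards.symm)
  refine ⟨hXV, hcard, by omega, ?_⟩
  rw [← hFeq]
  exact hF

lemma cover_nonempty {d : ℕ} {V : Finset α} {E : Finset (Sym2 α)}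
    (hval : ValidOn V E) (hEne : E.Nonempty) : (critCover d V E).Nonempty := by
  classical
  obtain ⟨e₀, he₀⟩ := hEne
  have hbase : ∃ U₀ F₀, CritSubgraph d V E U₀ F₀ := by
    revert he₀
    induction e₀ using Sym2.ind with
    | _ x y =>
      intro he₀
      have hxV : x ∈ V := (hval _ he₀).2 x (by simp)
      have hyV : y ∈ V := (hval _ he₀).2 y (by simp)
      have hxy : x ≠ y := by
        intro h
        exact (hval _ he₀).1 (by simp [h])
      refine ⟨{x, y}, {s(x, y)}, ⟨?_, ?_, ?_⟩, Or.inl ⟨?_, ?_⟩⟩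
      · intro v hv
        simp only [Finset.mem_insert, Finset.mem_singleton] at hv
        rcases hv with rfl | rfl <;> assumption
      · simpa using he₀
      · intro e he v hv
        simp only [Finset.mem_singleton] at he
        subst he
        rw [Sym2.mem_iff] at hv
        simpa using hv
      · rw [Finset.card_insert_of_notMem (by simp [hxy]), Finset.card_singleton]
      · exact Finset.card_singleton _
  obtain ⟨U₀, F₀, hU₀⟩ := hbase
  set S : Finset (Finset α × Finset (Sym2 α)) :=
    (V.powerset ×ˢ E.powerset).filter
      (fun p => CritSubgraph d V E p.1 p.2 ∧ U₀ ⊆ p.1 ∧ F₀ ⊆ p.2) with hS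
  have hne : S.Nonempty := by
    refine ⟨(U₀, F₀), ?_⟩
    rw [hS, Finset.mem_filter, Finset.mem_product, Finset.mem_powerset, Finset.mem_powerset]
    exact ⟨⟨hU₀.1.1, hU₀.1.2.1⟩, hU₀, le_refl _, le_refl _⟩
  obtain ⟨p, hp, hmax⟩ := S.exists_max_image (fun p => p.1.card + p.2.card) hne
  rw [hS, Finset.mem_filter] at hp
  refine ⟨p.1, ?_⟩
  rw [critCover, Finset.mem_filter, Finset.mem_powerset]
  refine ⟨hp.2.1.1.1, p.2, hp.2.1, ?_⟩
  intro U' F' hcs hsub1 hsub2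
  have hmem : (U', F') ∈ S := by
    rw [hS, Finset.mem_filter, Finset.mem_product, Finset.mem_powerset, Finset.mem_powerset]
    exact ⟨⟨hcs.1.1, hcs.1.2.1⟩, hcs, hp.2.2.1.trans hsub1, hp.2.2.2.trans hsub2⟩
  have hle := hmax (U', F') hmem
  simp only at hle
  have h1 : p.1.card ≤ U'.card := Finset.card_le_card hsub1
  have h2 : p.2.card ≤ F'.card := Finset.card_le_card hsub2
  constructor
  · exact Finset.eq_of_subset_of_card_le hsub1 (by omega)
  · exact Finset.eq_of_subset_of_card_le hsub2 (by omega)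

lemma thin {d : ℕ} {V : Finset α} {E : Finset (Sym2 α)} (hd : 2 ≤ d)
    (hsp : Sparse d V E)
    (hbig : ∀ U F, CritComponent d V E U F → d + 2 ≤ U.card)
    {X Y : Finset α} (hX : X ∈ critCover d V E) (hY : Y ∈ critCover d V E)
    (hne : X ≠ Y) : (X ∩ Y).card < d := by
  by_contra hcon
  push_neg at hcon
  obtain ⟨hXV, hXc, hXt, hXcomp⟩ := comp_spec hd hsp hbig hX
  obtain ⟨hYV, hYc, hYt, hYcomp⟩ := comp_spec hd hsp hbig hY
  have hIV : X ∩ Y ⊆ V := fun v hv => hXV (Finset.mem_inter.1 hv).1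
  have hUV : X ∪ Y ⊆ V := Finset.union_subset hXV hYV
  have hI := hsp (X ∩ Y) hIV hcon
  have hUcard : d ≤ (X ∪ Y).card := by
    have : X.card ≤ (X ∪ Y).card := Finset.card_le_card Finset.subset_union_left
    omega
  have hU := hsp (X ∪ Y) hUV hUcard
  have hsm := supermod E X Y
  have hcardUI : (X ∪ Y).card + (X ∩ Y).card = X.card + Y.card :=
    Finset.card_union_add_card_inter X Y
  have hmul : d * (X ∪ Y).card + d * (X ∩ Y).card = d * X.card + d * Y.card := by
    rw [← Nat.mul_add, ← Nat.mul_add, hcardUI]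
  have hiGX : iG E X = (inducedEdges E X).card := rfl
  have heq : iG E (X ∪ Y) + Nat.choose (d+1) 2 = d * (X ∪ Y).card := by
    apply le_antisymm hU
    -- d * (X ∪ Y).card ≤ iG E (X ∪ Y) + c
    have h1 : d * X.card + d * Y.card ≤
        iG E (X ∪ Y) + iG E (X ∩ Y) + 2 * Nat.choose (d+1) 2 := by
      have h2 : iG E X = (inducedEdges E X).card := rfl
      have h3 : iG E Y = (inducedEdges E Y).card := rfl
      linarith [hXt, hYt, hsm]
    linarith [hI, hmul, h1]
  have hXU : X.card ≤ (X ∪ Y).card := Finset.card_le_card Finset.subset_union_left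
  have hcs : CritSubgraph d V E (X ∪ Y) (inducedEdges E (X ∪ Y)) := by
    refine ⟨⟨hUV, Finset.filter_subset _ _, ?_⟩, Or.inr ⟨by omega, ?_⟩⟩
    · intro e he v hv
      rw [inducedEdges, Finset.mem_filter] at he
      exact he.2 v hv
    · exact heq
  have h1 := hXcomp.2 (X ∪ Y) (inducedEdges E (X ∪ Y)) hcs Finset.subset_union_left
    (inducedEdges_mono Finset.subset_union_left)
  have hYX : Y ⊆ X := by
    rw [h1.1]
    exact Finset.subset_union_right
  have h2 := hYcomp.2 X (inducedEdges E X) hXcomp.1 hYX (inducedEdges_mono hYX)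
  exact hne h2.1.symm

lemma deg_le_one_of_big {d : ℕ} {V : Finset α} {E : Finset (Sym2 α)} (hd : 2 ≤ d)
    (hsp : Sparse d V E)
    (hbig : ∀ U F, CritComponent d V E U F → d + 2 ≤ U.card)
    {T : Finset α} (hT : d ≤ T.card) : degX (critCover d V E) T ≤ 1 := by
  rw [degX]
  apply Finset.card_le_one.2
  intro X hX Y hY
  rw [Finset.mem_filter] at hX hY
  by_contra hne
  have hsub : T ⊆ X ∩ Y := Finset.subset_inter hX.2 hY.2
  have := Finset.card_le_card hsub
  have := thin hd hsp hbig hX.1 hY.1 hne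
  omega

lemma famIneq {d : ℕ} {V : Finset α} {E : Finset (Sym2 α)}
    (hval : ValidOn V E) (hsp : Sparse d V E)
    (𝒜 : Finset (Finset α))
    (hmem : ∀ X ∈ 𝒜, X ⊆ V ∧ d + 2 ≤ X.card ∧
      (inducedEdges E X).card + Nat.choose (d+1) 2 = d * X.card) :
    d * ∑ v ∈ V, ((𝒜.filter (fun X => v ∈ X)).card - 1)
      ≤ Nat.choose (d+1) 2 * (𝒜.card - 1)
        + ∑ e ∈ E, ((𝒜.filter (fun X => ∀ w ∈ e, w ∈ X)).card - 1) := by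
  classical
  rcases Finset.eq_empty_or_nonempty 𝒜 with rfl | h𝒜
  · simp
  set c := Nat.choose (d+1) 2 with hc
  have hsum1 : ∑ X ∈ 𝒜, X.card = ∑ v ∈ V, (𝒜.filter (fun X => v ∈ X)).card := by
    have h : ∀ X ∈ 𝒜, X.card = ∑ v ∈ V, (if v ∈ X then 1 else 0) := by
      intro X hX
      rw [← Finset.card_filter]
      congr 1
      rw [Finset.filter_mem_eq_inter, Finset.inter_eq_right.2 (hmem X hX).1]
    rw [Finset.sum_congr rfl h, Finset.sum_comm]
    exact Finset.sum_congr rfl (fun v _ => (Finset.card_filter _ _).symm)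
  have hsum2 : ∑ X ∈ 𝒜, (inducedEdges E X).card
      = ∑ e ∈ E, (𝒜.filter (fun X => ∀ w ∈ e, w ∈ X)).card := by
    have h : ∀ X ∈ 𝒜, (inducedEdges E X).card = ∑ e ∈ E, (if (∀ w ∈ e, w ∈ X) then 1 else 0) := by
      intro X _
      rw [inducedEdges, Finset.card_filter]
    rw [Finset.sum_congr rfl h, Finset.sum_comm]
    exact Finset.sum_congr rfl (fun e _ => (Finset.card_filter _ _).symm)
  set W := V.filter (fun v => (𝒜.filter (fun X => v ∈ X)).card ≠ 0) with hW
  set FE := E.filter (fun e => (𝒜.filter (fun X => ∀ w ∈ e, w ∈ X)).card ≠ 0) with hFE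
  have hWsplit : ∑ v ∈ V, (𝒜.filter (fun X => v ∈ X)).card
      = W.card + ∑ v ∈ V, ((𝒜.filter (fun X => v ∈ X)).card - 1) := by
    rw [hW, Finset.card_filter, ← Finset.sum_add_distrib]
    refine Finset.sum_congr rfl (fun v _ => ?_)
    split
    · omega
    · next h => simp only [not_not] at h; omega
  have hFEsplit : ∑ e ∈ E, (𝒜.filter (fun X => ∀ w ∈ e, w ∈ X)).card
      = FE.card + ∑ e ∈ E, ((𝒜.filter (fun X => ∀ w ∈ e, w ∈ X)).card - 1) := by
    rw [hFE, Finset.card_filter, ← Finset.sum_add_distrib]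
    refine Finset.sum_congr rfl (fun e _ => ?_)
    split
    · omega
    · next h => simp only [not_not] at h; omega
  obtain ⟨X₀, hX₀⟩ := h𝒜
  have hX₀W : X₀ ⊆ W := by
    intro v hv
    rw [hW, Finset.mem_filter]
    exact ⟨(hmem X₀ hX₀).1 hv,
      Finset.card_ne_zero_of_mem (Finset.mem_filter.2 ⟨hX₀, hv⟩)⟩
  have hdW : d ≤ W.card := by
    have h1 := Finset.card_le_card hX₀W
    have h2 := (hmem X₀ hX₀).2.1
    omega
  have hspW := hsp W (Finset.filter_subset _ _) hdW
  have hFEsub : FE ⊆ inducedEdges E W := by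
    intro e he
    rw [hFE, Finset.mem_filter] at he
    obtain ⟨Y, hY⟩ := Finset.card_ne_zero.1 he.2
    rw [Finset.mem_filter] at hY
    rw [inducedEdges, Finset.mem_filter]
    refine ⟨he.1, fun v hv => ?_⟩
    rw [hW, Finset.mem_filter]
    refine ⟨(hval e he.1).2 v hv, ?_⟩
    exact Finset.card_ne_zero_of_mem (Finset.mem_filter.2 ⟨hY.1, hY.2 v hv⟩)
  have hFEcard : FE.card + c ≤ d * W.card := by
    have h1 : FE.card ≤ (inducedEdges E W).card := Finset.card_le_card hFEsub
    have h2 : iG E W = (inducedEdges E W).card := rfl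
    omega
  have htot : (∑ X ∈ 𝒜, (inducedEdges E X).card) + c * 𝒜.card = d * ∑ X ∈ 𝒜, X.card :=
    calc (∑ X ∈ 𝒜, (inducedEdges E X).card) + c * 𝒜.card
        = ∑ X ∈ 𝒜, ((inducedEdges E X).card + c) := by
          rw [Finset.sum_add_distrib, Finset.sum_const, smul_eq_mul, mul_comm]
      _ = ∑ X ∈ 𝒜, d * X.card := Finset.sum_congr rfl (fun X hX => (hmem X hX).2.2)
      _ = d * ∑ X ∈ 𝒜, X.card := by rw [Finset.mul_sum]
  have hr : 1 ≤ 𝒜.card := Finset.card_pos.2 ⟨X₀, hX₀⟩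
  obtain ⟨r', hr'⟩ : ∃ r', 𝒜.card = r' + 1 := ⟨𝒜.card - 1, by omega⟩
  have hcr : c * 𝒜.card = c * (𝒜.card - 1) + c := by rw [hr', Nat.add_sub_cancel, Nat.mul_add, Nat.mul_one]
  have hmulWA : d * (W.card + ∑ v ∈ V, ((𝒜.filter (fun X => v ∈ X)).card - 1))
      = d * W.card + d * ∑ v ∈ V, ((𝒜.filter (fun X => v ∈ X)).card - 1) := by ring
  rw [hsum1, hWsplit] at htot
  rw [hsum2, hFEsplit] at htot
  rw [hmulWA] at htot
  linarith [htot, hFEcard, hcr]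

/-- `Ek V 𝒳 k` is `∑_{|T| = k} (d_𝒳(T) - 1)`. -/
noncomputable def Ek (V : Finset α) (𝒳 : Finset (Finset α)) (k : ℕ) : ℕ :=
  ∑ T ∈ V.powersetCard k, (degX 𝒳 T - 1)

lemma sum_insert_powersetCard (V : Finset α) (k : ℕ) (f : Finset α → ℕ) :
    ∑ T ∈ V.powersetCard k, ∑ v ∈ V \ T, f (insert v T)
      = (k+1) * ∑ T' ∈ V.powersetCard (k+1), f T' := by
  classical
  rw [Finset.sum_sigma' (V.powersetCard k) (fun T => V \ T) (fun T v => f (insert v T))]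
  have hmaps : ∀ p ∈ (V.powersetCard k).sigma (fun T => V \ T),
      insert p.2 p.1 ∈ V.powersetCard (k+1) := by
    intro p hp
    rw [Finset.mem_sigma] at hp
    rw [Finset.mem_powersetCard] at hp ⊢
    obtain ⟨⟨hsub, hcard⟩, hv⟩ := hp
    rw [Finset.mem_sdiff] at hv
    constructor
    · exact Finset.insert_subset hv.1 hsub
    · rw [Finset.card_insert_of_notMem hv.2, hcard]
  rw [← Finset.sum_fiberwise_of_maps_to hmaps (fun p => f (insert p.2 p.1))]
  rw [Finset.mul_sum]
  refine Finset.sum_congr rfl (fun T' hT' => ?_)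
  have hconst : ∀ p ∈ ((V.powersetCard k).sigma (fun T => V \ T)).filter
      (fun p => insert p.2 p.1 = T'), f (insert p.2 p.1) = f T' := by
    intro p hp
    rw [Finset.mem_filter] at hp
    rw [hp.2]
  rw [Finset.sum_congr rfl hconst, Finset.sum_const, smul_eq_mul]
  congr 1
  -- fiber cardinality is k+1
  rw [Finset.mem_powersetCard] at hT'
  have hfib : (((V.powersetCard k).sigma (fun T => V \ T)).filter
      (fun p => insert p.2 p.1 = T')).card = T'.card := by
    refine Finset.card_bij (fun (p : (_ : Finset α) × α) _ => p.2) ?_ ?_ ?_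
    · intro p hp
      rw [Finset.mem_filter] at hp
      show p.2 ∈ T'
      rw [← hp.2]
      exact Finset.mem_insert_self _ _
    · intro p hp q hq heq
      rw [Finset.mem_filter, Finset.mem_sigma, Finset.mem_sdiff] at hp hq
      have hp1 : p.1 = T'.erase p.2 := by
        rw [← hp.2, Finset.erase_insert hp.1.2.2]
      have hq1 : q.1 = T'.erase q.2 := by
        rw [← hq.2, Finset.erase_insert hq.1.2.2]
      obtain ⟨pa, pb⟩ := p
      obtain ⟨qa, qb⟩ := q
      simp only at heq hp1 hq1
      subst heq
      rw [hp1, hq1]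
    · intro v hv
      refine ⟨⟨T'.erase v, v⟩, ?_, rfl⟩
      rw [Finset.mem_filter, Finset.mem_sigma, Finset.mem_sdiff, Finset.mem_powersetCard]
      refine ⟨⟨⟨(Finset.erase_subset _ _).trans hT'.1, ?_⟩, hT'.1 hv, Finset.notMem_erase _ _⟩,
        Finset.insert_erase hv⟩
      rw [Finset.card_erase_of_mem hv, hT'.2]
      rfl
  rw [hfib, hT'.2]

lemma sum_pairext {V : Finset α} {E : Finset (Sym2 α)} (hval : ValidOn V E)
    (k : ℕ) (f : Finset α → ℕ) :
    ∑ T ∈ V.powersetCard k, ∑ e ∈ E.filter (fun e => (pfin V e \ T).card = 2),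
        f (T ∪ pfin V e)
      ≤ Nat.choose (k+2) 2 * ∑ T' ∈ V.powersetCard (k+2), f T' := by
  classical
  rw [Finset.sum_sigma' (V.powersetCard k)
    (fun T => E.filter (fun e => (pfin V e \ T).card = 2)) (fun T e => f (T ∪ pfin V e))]
  have hdisj : ∀ p ∈ (V.powersetCard k).sigma
      (fun T => E.filter (fun e => (pfin V e \ T).card = 2)),
      Disjoint (p.1 : Finset α) (pfin V p.2) ∧ p.2 ∈ E := by
    intro p hp
    rw [Finset.mem_sigma, Finset.mem_filter] at hp
    have hpf : (pfin V p.2).card = 2 := card_pfin hval hp.2.1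
    have h1 := Finset.card_inter_add_card_sdiff (pfin V p.2) p.1
    have h2 : (pfin V p.2) ∩ p.1 = ∅ := Finset.card_eq_zero.1 (by omega)
    refine ⟨?_, hp.2.1⟩
    rw [Finset.disjoint_iff_inter_eq_empty, Finset.inter_comm]
    exact h2
  have hmaps : ∀ p ∈ (V.powersetCard k).sigma
      (fun T => E.filter (fun e => (pfin V e \ T).card = 2)),
      p.1 ∪ pfin V p.2 ∈ V.powersetCard (k+2) := by
    intro p hp
    obtain ⟨hdj, hpE⟩ := hdisj p hp
    rw [Finset.mem_sigma, Finset.mem_filter] at hp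
    rw [Finset.mem_powersetCard] at hp ⊢
    constructor
    · exact Finset.union_subset hp.1.1 (Finset.filter_subset _ _)
    · rw [Finset.card_union_of_disjoint hdj, hp.1.2, card_pfin hval hpE]
  rw [← Finset.sum_fiberwise_of_maps_to hmaps (fun p => f (p.1 ∪ pfin V p.2))]
  rw [Finset.mul_sum]
  apply Finset.sum_le_sum
  intro T' hT'
  have hconst : ∀ p ∈ ((V.powersetCard k).sigma
      (fun T => E.filter (fun e => (pfin V e \ T).card = 2))).filter
      (fun p => p.1 ∪ pfin V p.2 = T'), f (p.1 ∪ pfin V p.2) = f T' := by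
    intro p hp
    rw [Finset.mem_filter] at hp
    rw [hp.2]
  rw [Finset.sum_congr rfl hconst, Finset.sum_const, smul_eq_mul]
  have hcard : (((V.powersetCard k).sigma
      (fun T => E.filter (fun e => (pfin V e \ T).card = 2))).filter
      (fun p => p.1 ∪ pfin V p.2 = T')).card ≤ Nat.choose (k+2) 2 := by
    have hinj := Finset.card_le_card_of_injOn (fun p => pfin V p.2)
      (s := ((V.powersetCard k).sigma
        (fun T => E.filter (fun e => (pfin V e \ T).card = 2))).filter
        (fun p => p.1 ∪ pfin V p.2 = T'))
      (t := T'.powersetCard 2) ?_ ?_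
    · calc _ ≤ (T'.powersetCard 2).card := hinj
        _ = Nat.choose (k+2) 2 := by
          rw [Finset.card_powersetCard, (Finset.mem_powersetCard.1 hT').2]
    · intro p hp
      rw [Finset.mem_coe, Finset.mem_filter] at hp
      obtain ⟨hdj, hpE⟩ := hdisj p hp.1
      rw [Finset.mem_coe, Finset.mem_powersetCard]
      refine ⟨?_, card_pfin hval hpE⟩
      rw [← hp.2]
      exact Finset.subset_union_right
    · intro p hp q hq heq
      simp only [Finset.coe_filter, Set.mem_setOf_eq] at hp hq
      obtain ⟨hdjp, hpE⟩ := hdisj p hp.1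
      obtain ⟨hdjq, hqE⟩ := hdisj q hq.1
      simp only at heq
      have he : p.2 = q.2 := pfin_inj hval hpE hqE heq
      have h1 : p.1 = T' \ pfin V p.2 := by
        rw [← hp.2, Finset.union_sdiff_cancel_right hdjp]
      have h2 : q.1 = T' \ pfin V q.2 := by
        rw [← hq.2, Finset.union_sdiff_cancel_right hdjq]
      obtain ⟨pa, pb⟩ := p
      obtain ⟨qa, qb⟩ := q
      simp only at he h1 h2
      subst he
      rw [h1, h2]
  exact Nat.mul_le_mul_right _ hcard

lemma part0_sum {V : Finset α} {E : Finset (Sym2 α)} (hval : ValidOn V E)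
    (T : Finset α) (f : Finset α → ℕ) :
    ∑ e ∈ E.filter (fun e => (pfin V e \ T).card = 0), f (T ∪ pfin V e)
      ≤ Nat.choose T.card 2 * f T := by
  classical
  have hsubT : ∀ e ∈ E.filter (fun e => (pfin V e \ T).card = 0), pfin V e ⊆ T := by
    intro e he
    rw [Finset.mem_filter] at he
    exact Finset.sdiff_eq_empty_iff_subset.1 (Finset.card_eq_zero.1 he.2)
  have hcount : (E.filter (fun e => (pfin V e \ T).card = 0)).card ≤ Nat.choose T.card 2 := by
    have h := Finset.card_le_card_of_injOn (fun e => pfin V e)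
      (s := E.filter (fun e => (pfin V e \ T).card = 0)) (t := T.powersetCard 2) ?_ ?_
    · rwa [Finset.card_powersetCard] at h
    · intro e he
      rw [Finset.mem_coe, Finset.mem_powersetCard]
      rw [Finset.mem_coe, Finset.mem_filter] at he
      exact ⟨hsubT e (Finset.mem_filter.2 he), card_pfin hval he.1⟩
    · intro e he e' he' h
      rw [Finset.mem_coe, Finset.mem_filter] at he he'
      exact pfin_inj hval he.1 he'.1 h
  calc ∑ e ∈ E.filter (fun e => (pfin V e \ T).card = 0), f (T ∪ pfin V e)
      = ∑ _e ∈ E.filter (fun e => (pfin V e \ T).card = 0), f T := by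
        refine Finset.sum_congr rfl (fun e he => ?_)
        rw [Finset.union_eq_left.2 (hsubT e he)]
    _ = (E.filter (fun e => (pfin V e \ T).card = 0)).card * f T := by
        rw [Finset.sum_const, smul_eq_mul]
    _ ≤ Nat.choose T.card 2 * f T := Nat.mul_le_mul_right _ hcount

lemma part1_sum {V : Finset α} {E : Finset (Sym2 α)} (hval : ValidOn V E)
    (T : Finset α) (f : Finset α → ℕ) :
    ∑ e ∈ E.filter (fun e => (pfin V e \ T).card = 1), f (T ∪ pfin V e)
      ≤ T.card * ∑ v ∈ V \ T, f (insert v T) := by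
  classical
  have hmaps : ∀ e ∈ E.filter (fun e => (pfin V e \ T).card = 1),
      pfin V e \ T ∈ (V \ T).powersetCard 1 := by
    intro e he
    rw [Finset.mem_filter] at he
    rw [Finset.mem_powersetCard]
    exact ⟨Finset.sdiff_subset_sdiff (Finset.filter_subset _ _) (le_refl _), he.2⟩
  rw [← Finset.sum_fiberwise_of_maps_to hmaps (fun e => f (T ∪ pfin V e))]
  have hstep : ∀ P ∈ (V \ T).powersetCard 1,
      ∑ e ∈ (E.filter (fun e => (pfin V e \ T).card = 1)).filter
        (fun e => pfin V e \ T = P), f (T ∪ pfin V e) ≤ T.card * f (T ∪ P) := by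
    intro P hP
    have hconst : ∀ e ∈ (E.filter (fun e => (pfin V e \ T).card = 1)).filter
        (fun e => pfin V e \ T = P), f (T ∪ pfin V e) = f (T ∪ P) := by
      intro e he
      rw [Finset.mem_filter] at he
      have : T ∪ pfin V e = T ∪ P := by
        rw [← he.2, Finset.union_sdiff_self_eq_union]
      rw [this]
    rw [Finset.sum_congr rfl hconst, Finset.sum_const, smul_eq_mul]
    apply Nat.mul_le_mul_right
    -- fiber count ≤ T.card
    have h := Finset.card_le_card_of_injOn (fun e => pfin V e ∩ T)
      (s := (E.filter (fun e => (pfin V e \ T).card = 1)).filter (fun e => pfin V e \ T = P))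
      (t := T.powersetCard 1) ?_ ?_
    · rwa [Finset.card_powersetCard, Nat.choose_one_right] at h
    · intro e he
      rw [Finset.mem_coe, Finset.mem_filter, Finset.mem_filter] at he
      rw [Finset.mem_coe, Finset.mem_powersetCard]
      refine ⟨Finset.inter_subset_right, ?_⟩
      show (pfin V e ∩ T).card = 1
      have h1 := Finset.card_inter_add_card_sdiff (pfin V e) T
      rw [card_pfin hval he.1.1] at h1
      omega
    · intro e he e' he' h
      rw [Finset.mem_coe, Finset.mem_filter, Finset.mem_filter] at he he'
      apply pfin_inj hval he.1.1 he'.1.1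
      simp only at h
      have hsplit : ∀ s : Finset α, s ∩ T ∪ s \ T = s := by
        intro s
        ext w
        simp only [Finset.mem_union, Finset.mem_inter, Finset.mem_sdiff]
        tauto
      rw [← hsplit (pfin V e), ← hsplit (pfin V e'), h, he.2, he'.2]
  calc ∑ P ∈ (V \ T).powersetCard 1, ∑ e ∈ (E.filter (fun e => (pfin V e \ T).card = 1)).filter
        (fun e => pfin V e \ T = P), f (T ∪ pfin V e)
      ≤ ∑ P ∈ (V \ T).powersetCard 1, T.card * f (T ∪ P) := Finset.sum_le_sum hstep
    _ = T.card * ∑ P ∈ (V \ T).powersetCard 1, f (T ∪ P) := by rw [Finset.mul_sum]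
    _ = T.card * ∑ v ∈ V \ T, f (insert v T) := by
        congr 1
        rw [Finset.powersetCard_one, Finset.sum_map]
        refine Finset.sum_congr rfl (fun v hv => ?_)
        simp only [Function.Embedding.coeFn_mk]
        congr 1
        rw [Finset.insert_eq, Finset.union_comm]

lemma stepT {d : ℕ} {V : Finset α} {E : Finset (Sym2 α)} (hd : 2 ≤ d)
    (hval : ValidOn V E) (hsp : Sparse d V E)
    (hbig : ∀ U F, CritComponent d V E U F → d + 2 ≤ U.card)
    {k : ℕ} {T : Finset α} (hT : T ∈ V.powersetCard k) :
    d * (k * (degX (critCover d V E) T - 1))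
      + d * ∑ v ∈ V \ T, (degX (critCover d V E) (insert v T) - 1)
    ≤ (Nat.choose (d+1) 2 + Nat.choose k 2) * (degX (critCover d V E) T - 1)
      + k * ∑ v ∈ V \ T, (degX (critCover d V E) (insert v T) - 1)
      + ∑ e ∈ E.filter (fun e => (pfin V e \ T).card = 2),
          (degX (critCover d V E) (T ∪ pfin V e) - 1) := by
  classical
  set 𝒳 := critCover d V E with h𝒳
  set 𝒜 := 𝒳.filter (fun X => T ⊆ X) with h𝒜
  obtain ⟨hTV, hTk⟩ := Finset.mem_powersetCard.1 hT
  have hfam := famIneq hval hsp 𝒜 (fun X hX => by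
    have hX𝒳 : X ∈ 𝒳 := (Finset.mem_filter.1 hX).1
    obtain ⟨h1, h2, h3, _⟩ := comp_spec hd hsp hbig hX𝒳
    exact ⟨h1, h2, h3⟩)
  have hcardA : 𝒜.card = degX 𝒳 T := rfl
  have hdegT : ∀ v ∈ T, (𝒜.filter (fun X => v ∈ X)).card = degX 𝒳 T := by
    intro v hv
    rw [h𝒜, Finset.filter_filter, degX]
    congr 1
    apply Finset.filter_congr
    intro X _
    constructor
    · exact fun h => h.1
    · exact fun h => ⟨h, h hv⟩
  have hdegV : ∀ v ∈ V \ T, (𝒜.filter (fun X => v ∈ X)).card = degX 𝒳 (insert v T) := by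
    intro v _
    rw [h𝒜, Finset.filter_filter, degX]
    congr 1
    apply Finset.filter_congr
    intro X _
    rw [Finset.insert_subset_iff]
    tauto
  have hAsplit : ∑ v ∈ V, ((𝒜.filter (fun X => v ∈ X)).card - 1)
      = ∑ v ∈ V \ T, (degX 𝒳 (insert v T) - 1) + k * (degX 𝒳 T - 1) := by
    rw [← Finset.sum_sdiff hTV]
    congr 1
    · exact Finset.sum_congr rfl (fun v hv => by rw [hdegV v hv])
    · rw [Finset.sum_congr rfl (fun v hv => by rw [hdegT v hv]), Finset.sum_const, hTk,
        smul_eq_mul]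
  have hB : ∑ e ∈ E, ((𝒜.filter (fun X => ∀ w ∈ e, w ∈ X)).card - 1)
      = ∑ e ∈ E, (degX 𝒳 (T ∪ pfin V e) - 1) := by
    refine Finset.sum_congr rfl (fun e he => ?_)
    have hfe : 𝒜.filter (fun X => ∀ w ∈ e, w ∈ X)
        = 𝒳.filter (fun X => T ∪ pfin V e ⊆ X) := by
      rw [h𝒜, Finset.filter_filter]
      apply Finset.filter_congr
      intro X _
      rw [Finset.union_subset_iff, forall_mem_iff_pfin_subset hval he]
    rw [hfe]
    rfl
  have hE2 : ∀ e ∈ E, (pfin V e \ T).card ≤ 2 := by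
    intro e he
    have h1 : (pfin V e \ T).card ≤ (pfin V e).card :=
      Finset.card_le_card Finset.sdiff_subset
    rw [card_pfin hval he] at h1
    exact h1
  have hf1 : (E.filter (fun e => ¬(pfin V e \ T).card = 0)).filter
      (fun e => (pfin V e \ T).card = 1) = E.filter (fun e => (pfin V e \ T).card = 1) := by
    rw [Finset.filter_filter]
    apply Finset.filter_congr
    intro e _
    constructor
    · exact fun h => h.2
    · exact fun h => ⟨by omega, h⟩
  have hf2 : (E.filter (fun e => ¬(pfin V e \ T).card = 0)).filter
      (fun e => ¬(pfin V e \ T).card = 1) = E.filter (fun e => (pfin V e \ T).card = 2) := by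
    rw [Finset.filter_filter]
    apply Finset.filter_congr
    intro e he
    have := hE2 e he
    constructor
    · intro h; omega
    · intro h; omega
  have h01 := Finset.sum_filter_add_sum_filter_not E (fun e => (pfin V e \ T).card = 0)
    (fun e => (degX 𝒳 (T ∪ pfin V e) - 1))
  have h12 := Finset.sum_filter_add_sum_filter_not
    (E.filter (fun e => ¬(pfin V e \ T).card = 0)) (fun e => (pfin V e \ T).card = 1)
    (fun e => (degX 𝒳 (T ∪ pfin V e) - 1))
  rw [hf1, hf2] at h12
  have hp0 := part0_sum hval T (fun S => degX 𝒳 S - 1)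
  rw [hTk] at hp0
  have hp1 := part1_sum hval T (fun S => degX 𝒳 S - 1)
  rw [hTk] at hp1
  rw [hAsplit, hcardA] at hfam
  rw [hB] at hfam
  -- assemble
  have hmulA : d * (∑ v ∈ V \ T, (degX 𝒳 (insert v T) - 1) + k * (degX 𝒳 T - 1))
      = d * ∑ v ∈ V \ T, (degX 𝒳 (insert v T) - 1) + d * (k * (degX 𝒳 T - 1)) := by ring
  rw [hmulA] at hfam
  have hdeg1 : Nat.choose (d+1) 2 * (degX 𝒳 T - 1)
      + Nat.choose k 2 * (degX 𝒳 T - 1)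
      = (Nat.choose (d+1) 2 + Nat.choose k 2) * (degX 𝒳 T - 1) := by ring
  linarith [hfam, hp0, hp1, h01, h12, hdeg1]

lemma two_mul_choose_two (n : ℕ) : 2 * Nat.choose (n+1) 2 = (n+1) * n := by
  rw [Nat.choose_two_right]
  have h1 : n + 1 - 1 = n := rfl
  rw [h1]
  have h2 : 2 ∣ (n+1) * n := by
    have h3 := Nat.even_mul_succ_self n
    rw [mul_comm] at h3
    exact h3.two_dvd
  exact Nat.mul_div_cancel' h2

lemma casc {d : ℕ} {V : Finset α} {E : Finset (Sym2 α)} (hd : 2 ≤ d)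
    (hval : ValidOn V E) (hsp : Sparse d V E)
    (hbig : ∀ U F, CritComponent d V E U F → d + 2 ≤ U.card) (k : ℕ) :
    d * k * Ek V (critCover d V E) k
      + d * ((k+1) * Ek V (critCover d V E) (k+1))
    ≤ (Nat.choose (d+1) 2 + Nat.choose k 2) * Ek V (critCover d V E) k
      + k * ((k+1) * Ek V (critCover d V E) (k+1))
      + Nat.choose (k+2) 2 * Ek V (critCover d V E) (k+2) := by
  classical
  set 𝒳 := critCover d V E with h𝒳
  have hsum := Finset.sum_le_sum (s := V.powersetCard k)
    (f := fun T => d * (k * (degX 𝒳 T - 1))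
      + d * ∑ v ∈ V \ T, (degX 𝒳 (insert v T) - 1))
    (g := fun T => (Nat.choose (d+1) 2 + Nat.choose k 2) * (degX 𝒳 T - 1)
      + k * ∑ v ∈ V \ T, (degX 𝒳 (insert v T) - 1)
      + ∑ e ∈ E.filter (fun e => (pfin V e \ T).card = 2),
          (degX 𝒳 (T ∪ pfin V e) - 1))
    (fun T hT => stepT hd hval hsp hbig hT)
  have hD := sum_insert_powersetCard V k (fun S => degX 𝒳 S - 1)
  have hS := sum_pairext hval k (fun S => degX 𝒳 S - 1)
  have h1 : ∑ T ∈ V.powersetCard k, d * (k * (degX 𝒳 T - 1)) = d * k * Ek V 𝒳 k := by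
    rw [Ek, Finset.mul_sum]
    exact Finset.sum_congr rfl (fun T _ => by ring)
  have h2 : ∑ T ∈ V.powersetCard k, (d * ∑ v ∈ V \ T, (degX 𝒳 (insert v T) - 1))
      = d * ((k+1) * Ek V 𝒳 (k+1)) := by
    rw [← Finset.mul_sum, hD, Ek]
  have h3 : ∑ T ∈ V.powersetCard k,
      ((Nat.choose (d+1) 2 + Nat.choose k 2) * (degX 𝒳 T - 1))
      = (Nat.choose (d+1) 2 + Nat.choose k 2) * Ek V 𝒳 k := by
    rw [Ek, Finset.mul_sum]
  have h4 : ∑ T ∈ V.powersetCard k, (k * ∑ v ∈ V \ T, (degX 𝒳 (insert v T) - 1))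
      = k * ((k+1) * Ek V 𝒳 (k+1)) := by
    rw [← Finset.mul_sum, hD, Ek]
  have h5 : ∑ T ∈ V.powersetCard k, ∑ e ∈ E.filter (fun e => (pfin V e \ T).card = 2),
      (degX 𝒳 (T ∪ pfin V e) - 1) ≤ Nat.choose (k+2) 2 * Ek V 𝒳 (k+2) := by
    rw [Ek]
    exact hS
  rw [Finset.sum_add_distrib, h1, h2] at hsum
  rw [Finset.sum_add_distrib, Finset.sum_add_distrib, h3, h4] at hsum
  linarith [hsum, h5]

lemma Ek_eq_zero {d : ℕ} {V : Finset α} {E : Finset (Sym2 α)} (hd : 2 ≤ d)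
    (hsp : Sparse d V E)
    (hbig : ∀ U F, CritComponent d V E U F → d + 2 ≤ U.card)
    {k : ℕ} (hk : d ≤ k) : Ek V (critCover d V E) k = 0 := by
  rw [Ek]
  apply Finset.sum_eq_zero
  intro T hT
  have h1 : d ≤ T.card := by
    rw [(Finset.mem_powersetCard.1 hT).2]
    exact hk
  have h2 := deg_le_one_of_big hd hsp hbig h1
  omega

lemma descend {d : ℕ} {V : Finset α} {E : Finset (Sym2 α)} (hd : 2 ≤ d)
    (hval : ValidOn V E) (hsp : Sparse d V E)
    (hbig : ∀ U F, CritComponent d V E U F → d + 2 ≤ U.card) :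
    ∀ j k, 1 ≤ k → d ≤ k + j →
      (k+1) * Ek V (critCover d V E) (k+1) ≤ (d - k) * Ek V (critCover d V E) k := by
  intro j
  induction j with
  | zero =>
    intro k _ hdk
    have h0 : Ek V (critCover d V E) (k+1) = 0 := Ek_eq_zero hd hsp hbig (by omega)
    rw [h0]
    simp
  | succ j ih =>
    intro k hk hdk
    by_cases hcase : d ≤ k + j
    · exact ih k hk hcase
    · have hkd : k + 1 ≤ d := by omega
      have hstar := casc hd hval hsp hbig k
      have hIH := ih (k+1) (by omega) (by omega)
      set E0 := Ek V (critCover d V E) k with hE0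
      set E1 := Ek V (critCover d V E) (k+1) with hE1
      set E2 := Ek V (critCover d V E) (k+2) with hE2
      obtain ⟨a, ha⟩ : ∃ a, d = k + a := ⟨d - k, by omega⟩
      have ha1 : 1 ≤ a := by omega
      have hgoal : d - k = a := by omega
      rw [hgoal]
      have hIH' : (k+1+1) * E2 ≤ (a - 1) * E1 := by
        have : d - (k+1) = a - 1 := by omega
        rw [← this]
        exact hIH
      -- double hstar
      have h2c : 2 * Nat.choose (d+1) 2 = (d+1) * d := two_mul_choose_two d
      obtain ⟨k', hk'⟩ : ∃ k', k = k' + 1 := ⟨k - 1, by omega⟩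
      have h2k : 2 * Nat.choose k 2 = k * k' := by
        rw [hk', two_mul_choose_two k']
      have h2k2 : 2 * Nat.choose (k+2) 2 = (k+2) * (k+1) := two_mul_choose_two (k+1)
      obtain ⟨a', ha'⟩ : ∃ a', a = a' + 1 := ⟨a - 1, by omega⟩
      have hIH'' : (k+2) * E2 ≤ a' * E1 := by
        have h : a - 1 = a' := by omega
        rw [h] at hIH'
        have h' : k + 1 + 1 = k + 2 := by omega
        rw [h'] at hIH'
        exact hIH'
      -- conclude (k+1)*(a+1)*E1 ≤ a*(a+1)*E0, then cancel
      have hmain : (a + 1) * ((k+1) * E1) ≤ (a + 1) * (a * E0) := by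
        have hstar2 : 2 * (d * k * E0 + d * ((k+1) * E1))
            ≤ 2 * ((Nat.choose (d+1) 2 + Nat.choose k 2) * E0 + k * ((k+1) * E1)
              + Nat.choose (k+2) 2 * E2) := Nat.mul_le_mul_left 2 hstar
        have hIH3 : (k+1) * ((k+2) * E2) ≤ (k+1) * (a' * E1) :=
          Nat.mul_le_mul_left (k+1) hIH''
        zify at hstar2 hIH3 h2c h2k h2k2 ⊢
        subst ha
        subst ha'
        subst hk'
        push_cast at hstar2 hIH3 h2c h2k h2k2 ⊢
        have hc1 := congrArg (fun z : ℤ => z * (E0 : ℤ)) h2c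
        have hc2 := congrArg (fun z : ℤ => z * (E0 : ℤ)) h2k
        have hc3 := congrArg (fun z : ℤ => z * (E2 : ℤ)) h2k2
        ring_nf at hstar2 hIH3 hc1 hc2 hc3 ⊢
        linarith [hstar2, hIH3, hc1, hc2, hc3]
      exact Nat.le_of_mul_le_mul_left hmain (by omega)

end Stmt9
/-- the total number of (1-hinge, component) incidences is less than `2d |𝒳|`. -/
theorem stmt9 (d : ℕ) (hd : 2 ≤ d)
    (V : Finset α) (E : Finset (Sym2 α)) (hval : ValidOn V E) (hsp : Sparse d V E)
    (hEne : E.Nonempty)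
    (𝒳 : Finset (Finset α)) (h𝒳 : 𝒳 = critCover d V E)
    (hbig : ∀ U F, CritComponent d V E U F → d + 2 ≤ U.card) :
    ∑ U ∈ theta V 𝒳 1, degX 𝒳 U < 2 * d * 𝒳.card := by
  classical
  subst h𝒳
  set 𝒳 := critCover d V E with h𝒳
  have hm : 1 ≤ 𝒳.card := Finset.card_pos.2 (Stmt9.cover_nonempty hval hEne)
  have hfam := Stmt9.famIneq hval hsp 𝒳 (fun X hX => by
    obtain ⟨h1, h2, h3, _⟩ := Stmt9.comp_spec hd hsp hbig hX
    exact ⟨h1, h2, h3⟩)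
  have hE1eq : Stmt9.Ek V 𝒳 1 = ∑ v ∈ V, ((𝒳.filter (fun X => v ∈ X)).card - 1) := by
    rw [Stmt9.Ek, Finset.powersetCard_one, Finset.sum_map]
    refine Finset.sum_congr rfl (fun v _ => ?_)
    simp only [Function.Embedding.coeFn_mk]
    congr 1
    rw [degX]
    congr 1
    apply Finset.filter_congr
    intro X _
    exact Finset.singleton_subset_iff
  have hB2 : ∑ e ∈ E, ((𝒳.filter (fun X => ∀ w ∈ e, w ∈ X)).card - 1) ≤ Stmt9.Ek V 𝒳 2 := by
    have h1 : ∑ e ∈ E, ((𝒳.filter (fun X => ∀ w ∈ e, w ∈ X)).card - 1)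
        = ∑ e ∈ E, (degX 𝒳 (Stmt9.pfin V e) - 1) := by
      refine Finset.sum_congr rfl (fun e he => ?_)
      congr 1
      rw [degX]
      congr 1
      apply Finset.filter_congr
      intro X _
      exact Stmt9.forall_mem_iff_pfin_subset hval he
    rw [h1, ← Finset.sum_image (f := fun P => degX 𝒳 P - 1) (g := Stmt9.pfin V)
      (fun e he e' he' h => Stmt9.pfin_inj hval he he' h)]
    rw [Stmt9.Ek]
    apply Finset.sum_le_sum_of_subset
    intro P hP
    rw [Finset.mem_image] at hP
    obtain ⟨e, he, rfl⟩ := hP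
    rw [Finset.mem_powersetCard]
    exact ⟨Finset.filter_subset _ _, Stmt9.card_pfin hval he⟩
  have hfam2 : d * Stmt9.Ek V 𝒳 1 ≤ Nat.choose (d+1) 2 * (𝒳.card - 1) + Stmt9.Ek V 𝒳 2 := by
    rw [hE1eq]
    exact le_trans hfam (Nat.add_le_add_left hB2 _)
  have hdesc := Stmt9.descend hd hval hsp hbig d 1 (le_refl 1) (by omega)
  have hE1le : Stmt9.Ek V 𝒳 1 ≤ d * (𝒳.card - 1) := by
    have h2c : 2 * Nat.choose (d+1) 2 = (d+1) * d := Stmt9.two_mul_choose_two d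
    set M := 𝒳.card - 1 with hM
    have hmul : (d+1) * Stmt9.Ek V 𝒳 1 ≤ (d+1) * (d * M) := by
      have hf2 : 2 * (d * Stmt9.Ek V 𝒳 1)
          ≤ 2 * (Nat.choose (d+1) 2 * M + Stmt9.Ek V 𝒳 2) := Nat.mul_le_mul_left 2 hfam2
      obtain ⟨d', hd'⟩ : ∃ d', d = d' + 2 := ⟨d - 2, by omega⟩
      have hdesc' : 2 * Stmt9.Ek V 𝒳 2 ≤ (d' + 1) * Stmt9.Ek V 𝒳 1 := by
        have h : d - 1 = d' + 1 := by omega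
        rw [h] at hdesc
        exact hdesc
      zify at hf2 hdesc' h2c ⊢
      have hc1 := congrArg (fun z : ℤ => z * (M : ℤ)) h2c
      subst hd'
      push_cast at hf2 hdesc' hc1 ⊢
      ring_nf at hf2 hdesc' hc1 ⊢
      linarith [hf2, hdesc', hc1]
    exact Nat.le_of_mul_le_mul_left hmul (by omega)
  have hθsub : theta V 𝒳 1 ⊆ V.powersetCard 1 := by
    intro U hU
    rw [theta, Finset.mem_filter, Finset.mem_powerset] at hU
    rw [Finset.mem_powersetCard]
    exact ⟨hU.1, hU.2.1⟩
  have hsumθ : ∑ U ∈ theta V 𝒳 1, degX 𝒳 U ≤ 2 * Stmt9.Ek V 𝒳 1 := by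
    calc ∑ U ∈ theta V 𝒳 1, degX 𝒳 U
        ≤ ∑ U ∈ theta V 𝒳 1, 2 * (degX 𝒳 U - 1) := by
          refine Finset.sum_le_sum (fun U hU => ?_)
          rw [theta, Finset.mem_filter] at hU
          have := hU.2.2
          omega
      _ ≤ ∑ U ∈ V.powersetCard 1, 2 * (degX 𝒳 U - 1) :=
          Finset.sum_le_sum_of_subset hθsub
      _ = 2 * Stmt9.Ek V 𝒳 1 := by rw [Stmt9.Ek, Finset.mul_sum]
  calc ∑ U ∈ theta V 𝒳 1, degX 𝒳 U ≤ 2 * Stmt9.Ek V 𝒳 1 := hsumθ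
    _ ≤ 2 * (d * (𝒳.card - 1)) := Nat.mul_le_mul_left 2 hE1le
    _ < 2 * d * 𝒳.card := by
        have h1 : 𝒳.card - 1 < 𝒳.card := by omega
        have h2 : (0:ℕ) < 2 * d := by omega
        calc 2 * (d * (𝒳.card - 1)) = 2 * d * (𝒳.card - 1) := by ring
          _ < 2 * d * 𝒳.card := mul_lt_mul_of_pos_left h1 h2
end

section
/- Let G₁ and G₂ be two copies of the complete graph K₅ whose vertex sets intersect in exactly two vertices u and v, and let G be the graph obtained from G₁ ∪ G₂ by deleting the edge uv. Then G is a graph on 8 vertices with 18 edges and G is 3-sparse, i.e. every subset X of vertices with |X| ≥ 3 induces at most 3|X| − 6 edges of G. -/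
open Finset
open scoped Classical

variable {α : Type*} [DecidableEq α]

noncomputable def K' (S : Finset α) : Finset (Sym2 α) := S.sym2.filter fun e => ¬ e.IsDiag

lemma mem_K' {S : Finset α} {e : Sym2 α} : e ∈ K' S ↔ (∀ x ∈ e, x ∈ S) ∧ ¬ e.IsDiag := by
  simp [K', Finset.mem_sym2_iff]

lemma K'_card (S : Finset α) : (K' S).card = Nat.choose S.card 2 := by
  have hd : S.sym2.filter (fun e => e.IsDiag) = S.image Sym2.diag := by
    ext e
    induction e using Sym2.ind with
    | _ x y =>
      simp only [mem_filter, Finset.mk_mem_sym2_iff, mem_image, Sym2.isDiag_iff_proj_eq]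
      constructor
      · rintro ⟨⟨hx, hy⟩, h⟩; exact ⟨x, hx, by simp [Sym2.diag, h]⟩
      · rintro ⟨a, ha, h⟩
        have : x = a ∧ y = a := by
          have := (Sym2.eq_iff.mp (by unfold Sym2.diag at h; exact h.symm : s(x, y) = s(a, a))); simpa [Prod.ext_iff] using this
        simp [this.1, this.2, ha]
  have h1 := Finset.card_filter_add_card_filter_not (s := S.sym2) (p := fun e => e.IsDiag)
  have h2 : (S.sym2.filter (fun e => e.IsDiag)).card = S.card := by
    rw [hd, Finset.card_image_of_injective _ Sym2.diag_injective]
  have h3 : (S.card + 1).choose 2 = S.card.choose 2 + S.card := by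
    rw [Nat.choose_succ_succ, Nat.choose_one_right, add_comm]
  have h4 : S.sym2.card = (S.card + 1).choose 2 := Finset.card_sym2 S
  have h5 : (K' S).card = (S.sym2.filter (fun e => ¬ e.IsDiag)).card := by rw [K']
  rw [h5]
  omega

lemma K'_inter (S T : Finset α) : K' S ∩ K' T = K' (S ∩ T) := by
  ext e
  simp only [mem_inter, mem_K', Finset.mem_inter, forall_and]
  tauto

lemma K'_pair {u v : α} (huv : u ≠ v) : K' ({u, v} : Finset α) = {s(u, v)} := by
  ext e
  induction e using Sym2.ind with
  | _ x y =>
    simp only [mem_K', Sym2.mem_iff, mem_insert, mem_singleton, Sym2.mk_isDiag_iff,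
      Sym2.eq_iff]
    constructor
    · rintro ⟨h, hxy⟩
      have hx := h x (Or.inl rfl)
      have hy := h y (Or.inr rfl)
      rcases hx with rfl | rfl <;> rcases hy with rfl | rfl <;> tauto
    · rintro (⟨rfl, rfl⟩ | ⟨rfl, rfl⟩) <;> exact ⟨by rintro z (rfl | rfl) <;> tauto, by tauto⟩

lemma ch0 : Nat.choose 0 2 = 0 := by decide
lemma ch1 : Nat.choose 1 2 = 0 := by decide
lemma ch2' : Nat.choose 2 2 = 1 := by decide
lemma ch3 : Nat.choose 3 2 = 3 := by decide
lemma ch4 : Nat.choose 4 2 = 6 := by decide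
lemma ch5 : Nat.choose 5 2 = 10 := by decide

lemma arithPos (a b n m : ℕ) (ha2 : 2 ≤ a) (ha5 : a ≤ 5) (hb2 : 2 ≤ b) (hb5 : b ≤ 5)
    (hn : n + 2 = a + b) (h3 : 3 ≤ n)
    (hm : m + 1 + 1 = Nat.choose a 2 + Nat.choose b 2) : m + 6 ≤ 3 * n := by
  interval_cases a <;> interval_cases b <;>
    simp only [ch0, ch1, ch2', ch3, ch4, ch5] at hm <;> omega

lemma arithNeg (a b n m c : ℕ) (ha5 : a ≤ 4) (hb5 : b ≤ 4) (hc : c ≤ 1)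
    (hca : c ≤ a) (hcb : c ≤ b)
    (hn : n + c = a + b) (h3 : 3 ≤ n)
    (hm : m + 0 = Nat.choose a 2 + Nat.choose b 2) : m + 6 ≤ 3 * n := by
  interval_cases a <;> interval_cases b <;>
    simp only [ch0, ch1, ch2', ch3, ch4, ch5] at hm <;> omega

/-- the parallel connection of two copies of `K₅` along an edge `uv`, with the
edge `uv` deleted, is a 3-sparse graph on 8 vertices with 18 edges. -/
theorem stmt17 (V₁ V₂ : Finset α) (u v : α) (huv : u ≠ v)
    (h₁ : V₁.card = 5) (h₂ : V₂.card = 5) (hint : V₁ ∩ V₂ = {u, v})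
    (E : Finset (Sym2 α))
    (hE : E = ((V₁.sym2.filter fun e => ¬ e.IsDiag) ∪
                (V₂.sym2.filter fun e => ¬ e.IsDiag)).erase s(u, v)) :
    (V₁ ∪ V₂).card = 8 ∧ E.card = 18 ∧ Sparse 3 (V₁ ∪ V₂) E := by
  have hEK : E = (K' V₁ ∪ K' V₂).erase s(u, v) := hE
  clear hE
  have hu12 : u ∈ V₁ ∩ V₂ := by rw [hint]; simp
  have hv12 : v ∈ V₁ ∩ V₂ := by rw [hint]; simp
  have hu1 : u ∈ V₁ := (mem_inter.mp hu12).1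
  have hv1 : v ∈ V₁ := (mem_inter.mp hv12).1
  have hu2 : u ∈ V₂ := (mem_inter.mp hu12).2
  have hv2 : v ∈ V₂ := (mem_inter.mp hv12).2
  have hpair : ({u, v} : Finset α).card = 2 := by
    rw [card_insert_of_notMem (by simpa using huv), card_singleton]
  have hVint : (V₁ ∩ V₂).card = 2 := by rw [hint, hpair]
  have hVu := Finset.card_union_add_card_inter V₁ V₂
  refine ⟨by omega, ?_, ?_⟩
  · -- E.card = 18
    have hKint : K' V₁ ∩ K' V₂ = {s(u, v)} := by
      rw [K'_inter, hint, K'_pair huv]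
    have hcu := Finset.card_union_add_card_inter (K' V₁) (K' V₂)
    rw [hKint, K'_card, K'_card, h₁, h₂, card_singleton] at hcu
    have hmem : s(u, v) ∈ K' V₁ ∪ K' V₂ := by
      apply mem_union_left
      rw [mem_K']
      constructor
      · intro x hx; rcases Sym2.mem_iff.mp hx with rfl | rfl <;> assumption
      · simpa using huv
    have := Finset.card_erase_add_one hmem
    have h10 : Nat.choose 5 2 = 10 := by decide
    rw [hEK]
    omega
  · -- Sparse
    intro X hX hcX
    have h6 : Nat.choose (3 + 1) 2 = 6 := by decide
    rw [h6]
    set A := X ∩ V₁ with hA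
    set B := X ∩ V₂ with hB
    have key : inducedEdges E X = (K' A ∪ K' B).erase s(u, v) := by
      ext e
      rw [hEK]
      simp only [inducedEdges, mem_filter, mem_erase, mem_union, mem_K', hA, hB,
        Finset.mem_inter, forall_and]
      tauto
    have hiG : iG E X = ((K' A ∪ K' B).erase s(u, v)).card := by rw [iG, key]
    have hXAB : X = A ∪ B := by
      rw [hA, hB, ← Finset.inter_union_distrib_left, Finset.inter_eq_left.mpr hX]
    have hABint : A ∩ B = X ∩ {u, v} := by
      rw [hA, hB, ← hint]; ext x; simp only [Finset.mem_inter]; tauto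
    have hcards : X.card + (A ∩ B).card = A.card + B.card := by
      conv_lhs => rw [hXAB]
      exact Finset.card_union_add_card_inter A B
    have ha5 : A.card ≤ 5 := h₁ ▸ Finset.card_le_card Finset.inter_subset_right
    have hb5 : B.card ≤ 5 := h₂ ▸ Finset.card_le_card Finset.inter_subset_right
    have hKiAB : K' A ∩ K' B = K' (A ∩ B) := K'_inter A B
    have hcu := Finset.card_union_add_card_inter (K' A) (K' B)
    rw [hKiAB, K'_card, K'_card, K'_card] at hcu
    by_cases huvX : u ∈ X ∧ v ∈ X
    · -- both u, v in X
      have hABeq : A ∩ B = {u, v} := by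
        rw [hABint, Finset.inter_eq_right.mpr]
        intro x hx; rcases mem_insert.mp hx with rfl | hx
        · exact huvX.1
        · rw [mem_singleton] at hx; subst hx; exact huvX.2
      have hc2 : (A ∩ B).card = 2 := by rw [hABeq, hpair]
      have hmem : s(u, v) ∈ K' A ∪ K' B := by
        apply mem_union_left
        rw [mem_K']
        constructor
        · intro x hx
          rcases Sym2.mem_iff.mp hx with rfl | rfl <;>
            · rw [hA, mem_inter]; tauto
        · simpa using huv
      have herase := Finset.card_erase_add_one hmem
      have ha2 : 2 ≤ A.card := by
        calc 2 = ({u, v} : Finset α).card := hpair.symm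
        _ ≤ A.card := Finset.card_le_card (by rw [← hABeq]; exact inter_subset_left)
      have hb2 : 2 ≤ B.card := by
        calc 2 = ({u, v} : Finset α).card := hpair.symm
        _ ≤ B.card := Finset.card_le_card (by rw [← hABeq]; exact inter_subset_right)
      rw [hc2, ch2'] at hcu
      rw [hiG]
      exact arithPos A.card B.card X.card _ ha2 ha5 hb2 hb5 (by omega) hcX
        (by omega)
    · -- not both u, v in X
      have hnot : s(u, v) ∉ K' A ∪ K' B := by
        intro hmem
        rcases mem_union.mp hmem with h | h <;> rw [mem_K'] at h
        · have hu' := h.1 u (by simp)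
          have hv' := h.1 v (by simp)
          rw [hA, mem_inter] at hu' hv'; exact huvX ⟨hu'.1, hv'.1⟩
        · have hu' := h.1 u (by simp)
          have hv' := h.1 v (by simp)
          rw [hB, mem_inter] at hu' hv'; exact huvX ⟨hu'.1, hv'.1⟩
      have herase : (K' A ∪ K' B).erase s(u, v) = K' A ∪ K' B :=
        Finset.erase_eq_of_notMem hnot
      have hABsub : A ∩ B ⊆ {u, v} := by rw [hABint]; exact inter_subset_right
      have hc1 : (A ∩ B).card ≤ 1 := by
        by_contra h
        push_neg at h
        have h2 : ({u, v} : Finset α).card ≤ (A ∩ B).card := by omega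
        have := Finset.eq_of_subset_of_card_le hABsub h2
        have hu' : u ∈ A ∩ B := by rw [this]; simp
        have hv' : v ∈ A ∩ B := by rw [this]; simp
        rw [hABint, mem_inter] at hu' hv'
        exact huvX ⟨hu'.1, hv'.1⟩
      have ha4 : A.card ≤ 4 := by
        by_contra h
        push_neg at h
        have hA5 : V₁.card ≤ A.card := by omega
        have hAV : A = V₁ := Finset.eq_of_subset_of_card_le Finset.inter_subset_right hA5
        have hu' : u ∈ A := hAV ▸ hu1
        have hv' : v ∈ A := hAV ▸ hv1
        rw [hA, mem_inter] at hu' hv'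
        exact huvX ⟨hu'.1, hv'.1⟩
      have hb4 : B.card ≤ 4 := by
        by_contra h
        push_neg at h
        have hB5 : V₂.card ≤ B.card := by omega
        have hBV : B = V₂ := Finset.eq_of_subset_of_card_le Finset.inter_subset_right hB5
        have hu' : u ∈ B := hBV ▸ hu2
        have hv' : v ∈ B := hBV ▸ hv2
        rw [hB, mem_inter] at hu' hv'
        exact huvX ⟨hu'.1, hv'.1⟩
      have hch0 : Nat.choose (A ∩ B).card 2 = 0 := Nat.choose_eq_zero_of_lt (by omega)
      rw [hch0] at hcu
      have hca : (A ∩ B).card ≤ A.card := Finset.card_le_card inter_subset_left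
      have hcb : (A ∩ B).card ≤ B.card := Finset.card_le_card inter_subset_right
      rw [hiG, herase]
      exact arithNeg A.card B.card X.card _ (A ∩ B).card ha4 hb4 hc1 hca hcb
        (by omega) hcX (by omega)
end
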